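/- arXiv:1611.03648 — 2 statements merged into one kernel-verified Lean document; each statement's English description precedes it below -/
import Mathlib

section
/- Let F be a maximum matching of G and K = E(G)\F. Among all Gallai–Edmonds decompositions (Q,R,S) of G with respect to F, choose one in which Q is maximal under containment. Then ER(K,F) = ⋃_{i∈I} V(H_i) and OR(K,F) = S ∪ ⋃_{i∈I}(V(H_i) \ {r_i}), where H_i are the components of G−S and r_i the vertices of H_i uncovered by F within H_i. -/
variable {V : Type*}

/-- A matching: a set of non-loop edges that are pairwise vertex-disjoint. -/
def IsMatching (M : Set (Sym2 V)) : Prop :=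
  (∀ e ∈ M, ¬ e.IsDiag) ∧ ∀ e ∈ M, ∀ f ∈ M, e ≠ f → ∀ v, v ∈ e → v ∉ f

/-- A vertex is covered by an edge set if it belongs to some edge. -/
def covered (M : Set (Sym2 V)) (v : V) : Prop := ∃ e ∈ M, v ∈ e

/-- A `K`–`F`-alternating path: a (simple) nonempty list of vertices whose
odd-numbered edges (0-indexed: even positions) lie in `K` and even-numbered edges lie in `F`. -/
def AltPath (K F : Set (Sym2 V)) (p : List V) : Prop :=
  p ≠ [] ∧ p.Nodup ∧ ∀ i, ∀ h : i + 1 < p.length,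
    s(p[i]'(Nat.lt_of_succ_lt h), p[i+1]'h) ∈ (if i % 2 = 0 then K else F)


/-- `x` is evenly `K`-reachable from `a`: there is a `K`–`F`-alternating path from `a` to `x`
with an even number of edges (an odd number of vertices); `x = a` via the empty path. -/
def evenReach (K F : Set (Sym2 V)) (a x : V) : Prop :=
  ∃ (p : List V) (hp : p ≠ []), AltPath K F p ∧ p.head hp = a ∧ p.getLast hp = x ∧
    Odd p.length

/-- `x` is oddly `K`-reachable from `a`: there is a `K`–`F`-alternating path from `a` to `x`
with an odd number of edges (an even, positive, number of vertices). -/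
def oddReach (K F : Set (Sym2 V)) (a x : V) : Prop :=
  ∃ (p : List V) (hp : p ≠ []), AltPath K F p ∧ p.head hp = a ∧ p.getLast hp = x ∧
    Even p.length


/-- A maximum matching of the graph with edge set `E`. -/
def IsMaxMatching (E F : Set (Sym2 V)) : Prop :=
  F ⊆ E ∧ IsMatching F ∧ ∀ M ⊆ E, IsMatching M → M.ncard ≤ F.ncard

/-- The edges of `F` contained in the vertex set `C` (the induced edge set `F[C]`). -/
def edgesIn (F : Set (Sym2 V)) (C : Set V) : Set (Sym2 V) := {e ∈ F | ∀ u ∈ e, u ∈ C}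

/-- The edges of `E` avoiding the vertex set `S` (edges of `G − S`). -/
def avoid (E : Set (Sym2 V)) (S : Set V) : Set (Sym2 V) := {e ∈ E | ∀ u ∈ e, u ∉ S}

/-- The connected component of `v` in the graph with edge set `E'`. -/
def comp (E' : Set (Sym2 V)) (v : V) : Set V :=
  {u | Relation.ReflTransGen (fun a b => s(a, b) ∈ E') v u}

/-- The induced subgraph on `C` is hypomatchable (factor-critical): for every `v ∈ C` there
is a matching inside `C` covering exactly `C \ {v}`. -/
def Hypomatchable (E : Set (Sym2 V)) (C : Set V) : Prop :=
  ∀ v ∈ C, ∃ M ⊆ edgesIn E C, IsMatching M ∧ ¬ covered M v ∧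
    ∀ u ∈ C, u ≠ v → covered M u

/-- A Gallai–Edmonds decomposition `(Q, R, S)` of the graph `E` with respect to the maximum
matching `F`: (1) `F[Q]` is a perfect matching of `Q`; (2) `R` is a union of connected
components of `G − S`, each hypomatchable and matched by `F` within itself except for exactly
one exposed vertex (its `r_i`); (3) every `s ∈ S` is matched by `F` to the exposed vertex
`r_i` of some component. -/
def IsGE (E F : Set (Sym2 V)) (Q R S : Set V) : Prop :=
  Q ∪ R ∪ S = Set.univ ∧ Disjoint Q R ∧ Disjoint Q S ∧ Disjoint R S ∧
  (∀ v ∈ Q, covered (edgesIn F Q) v) ∧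
  (∀ v ∈ R, comp (avoid E S) v ⊆ R ∧ Hypomatchable E (comp (avoid E S) v) ∧
    (∃! w, w ∈ comp (avoid E S) v ∧ ¬ covered (edgesIn F (comp (avoid E S) v)) w)) ∧
  (∀ s ∈ S, ∃ t, s(s, t) ∈ F ∧ t ∈ R ∧ ¬ covered (edgesIn F (comp (avoid E S) t)) t)

/-- `ER(K,F)`: the set of vertices evenly `K`-reachable from some `F`-uncovered vertex. -/
def ERset (K F : Set (Sym2 V)) : Set V := {x | ∃ a, ¬ covered F a ∧ evenReach K F a x}

/-- `OR(K,F)`: the set of vertices oddly `K`-reachable from some `F`-uncovered vertex. -/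
def ORset (K F : Set (Sym2 V)) : Set V := {x | ∃ a, ¬ covered F a ∧ oddReach K F a x}

variable {K F : Set (Sym2 V)}

lemma covered_iff {M : Set (Sym2 V)} {v : V} : covered M v ↔ ∃ w, s(v, w) ∈ M := by
  constructor
  · rintro ⟨e, he, hv⟩
    induction e with
    | h x y =>
      rcases Sym2.mem_iff.1 hv with rfl | rfl
      · exact ⟨y, he⟩
      · exact ⟨x, by rwa [Sym2.eq_swap]⟩
  · rintro ⟨w, hw⟩
    exact ⟨_, hw, Sym2.mem_mk_left _ _⟩

lemma matching_unique {M : Set (Sym2 V)} (hM : IsMatching M) {a b c : V}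
    (h1 : s(a, b) ∈ M) (h2 : s(a, c) ∈ M) : b = c := by
  by_cases he : s(a, b) = s(a, c)
  · rcases Sym2.eq_iff.1 he with ⟨-, h⟩ | ⟨h1', h2'⟩
    · exact h
    · exact h2'.trans h1'
  · exact absurd (Sym2.mem_mk_left a c) (hM.2 _ h1 _ h2 he a (Sym2.mem_mk_left a b))

lemma matching_ne {M : Set (Sym2 V)} (hM : IsMatching M) {a b : V} (h : s(a, b) ∈ M) :
    a ≠ b := by
  intro h'
  exact hM.1 _ h (by simp [Sym2.isDiag_iff_proj_eq, h'])

lemma matching_eq_edge {M : Set (Sym2 V)} (hM : IsMatching M) {a b : V} (h : s(a, b) ∈ M)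
    {e : Sym2 V} (he : e ∈ M) (hae : a ∈ e) : e = s(a, b) := by
  by_contra hne
  exact hM.2 _ he _ h hne a hae (Sym2.mem_mk_left a b)

lemma mem_comp_self (E' : Set (Sym2 V)) (v : V) : v ∈ comp E' v := Relation.ReflTransGen.refl

lemma comp_eq_of_mem {E' : Set (Sym2 V)} {v u : V} (h : u ∈ comp E' v) :
    comp E' u = comp E' v := by
  have hsymm : ∀ a b : V, s(a, b) ∈ E' → s(b, a) ∈ E' := by
    intro a b hab; rwa [Sym2.eq_swap]
  ext w
  constructor
  · intro hw
    exact Relation.ReflTransGen.trans h hw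
  · intro hw
    exact Relation.ReflTransGen.trans
      (Relation.reflTransGen_swap.1 (Relation.ReflTransGen.mono (p := Function.swap _) (fun a b hab => hsymm a b hab) _ _ h)) hw

lemma comp_tail {E' : Set (Sym2 V)} {v u w : V} (h : u ∈ comp E' v) (h2 : s(u, w) ∈ E') :
    w ∈ comp E' v := Relation.ReflTransGen.tail h h2


lemma head_eq_get {p : List V} (hp : p ≠ []) : p.head hp = p[0]'(List.length_pos_iff.2 hp) := by
  cases p with
  | nil => exact absurd rfl hp
  | cons a l => rfl

lemma getLast_eq_get {p : List V} (hp : p ≠ []) :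
    p.getLast hp = p[p.length - 1]'(by
      have := List.length_pos_iff.2 hp; omega) := by
  exact List.getLast_eq_getElem hp

lemma altPath_take {p : List V} (h : AltPath K F p) {n : ℕ} (hn : 1 ≤ n) :
    AltPath K F (p.take n) := by
  obtain ⟨hne, hnd, halt⟩ := h
  have hlp : 0 < p.length := List.length_pos_iff.2 hne
  refine ⟨?_, hnd.sublist (List.take_sublist n p), ?_⟩
  · have : 0 < (p.take n).length := by
      simp [List.length_take]; omega
    exact List.ne_nil_of_length_pos this
  · intro i hi
    have hlen : (p.take n).length = min n p.length := List.length_take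
    have h1 : i + 1 < p.length := by omega
    have e1 : (p.take n)[i]'(Nat.lt_of_succ_lt hi) = p[i]'(Nat.lt_of_succ_lt h1) := by
      simp [List.getElem_take]
    have e2 : (p.take n)[i+1]'hi = p[i+1]'h1 := by
      simp [List.getElem_take]
    rw [e1, e2]
    exact halt i h1

lemma altPath_snoc {p : List V} (h : AltPath K F p) {v : V} (hv : v ∉ p)
    (hedge : s(p[p.length - 1]'(by have := List.length_pos_iff.2 h.1; omega), v) ∈
      (if (p.length - 1) % 2 = 0 then K else F)) :
    AltPath K F (p ++ [v]) := by
  obtain ⟨hne, hnd, halt⟩ := h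
  have hlp : 0 < p.length := List.length_pos_iff.2 hne
  refine ⟨by simp, ?_, ?_⟩
  · rw [List.nodup_append]
    exact ⟨hnd, List.nodup_singleton v, fun a ha b hb hab => hv (by simp at hb; rw [← hb, ← hab]; exact ha)⟩
  · intro i hi
    simp only [List.length_append, List.length_singleton] at hi
    by_cases hil : i + 1 < p.length
    · have e1 : (p ++ [v])[i]'(by simp; omega) = p[i]'(Nat.lt_of_succ_lt hil) :=
        List.getElem_append_left (by omega)
      have e2 : (p ++ [v])[i+1]'(by simp; omega) = p[i+1]'hil :=
        List.getElem_append_left (by omega)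
      rw [e1, e2]
      exact halt i hil
    · have hip : i = p.length - 1 := by omega
      have e1 : (p ++ [v])[i]'(by simp; omega) = p[i]'(by omega) :=
        List.getElem_append_left (by omega)
      have e2 : (p ++ [v])[i+1]'(by simp; omega) = v := by
        have : i + 1 = p.length := by omega
        simp [this]
      rw [e1, e2]
      subst hip
      exact hedge

lemma altPath_singleton (v : V) : AltPath K F [v] := by
  refine ⟨by simp, by simp, ?_⟩
  intro i hi
  simp at hi

lemma getLast_snoc' (p : List V) (v : V) : (p ++ [v]).getLast (by simp) = v := by
  simp

lemma head_snoc (p : List V) (v : V) (hp : p ≠ []) : (p ++ [v]).head (by simp) = p.head hp := by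
  cases p with
  | nil => exact absurd rfl hp
  | cons a l => rfl


lemma sym2_forall {P : V → Prop} {a b : V} : (∀ u ∈ s(a, b), P u) ↔ P a ∧ P b := by
  constructor
  · intro h
    exact ⟨h a (Sym2.mem_mk_left a b), h b (Sym2.mem_mk_right a b)⟩
  · rintro ⟨ha, hb⟩ u hu
    rcases Sym2.mem_iff.1 hu with rfl | rfl <;> assumption

lemma covered_of_edgesIn {C : Set V} {v : V} (h : covered (edgesIn F C) v) : covered F v := by
  obtain ⟨e, he, hv⟩ := h
  exact ⟨e, he.1, hv⟩

lemma head_take {p : List V} (hp : p ≠ []) {n : ℕ} (hn : 1 ≤ n) :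
    (p.take n).head (by
      have := List.length_pos_iff.2 hp
      exact List.ne_nil_of_length_pos (by simp [List.length_take]; omega)) = p.head hp := by
  rw [head_eq_get, head_eq_get]
  simp [List.getElem_take]

lemma mem_ER_idx {p : List V} (hp : AltPath K F p) (ha : ¬ covered F (p.head hp.1))
    {i : ℕ} (hi : i < p.length) (hpar : i % 2 = 0) : p[i] ∈ ERset K F := by
  refine ⟨p.head hp.1, ha, p.take (i+1), ?_, altPath_take hp (by omega), ?_, ?_, ?_⟩
  · have := List.length_pos_iff.2 hp.1
    exact List.ne_nil_of_length_pos (by simp [List.length_take]; omega)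
  · exact head_take hp.1 (by omega)
  · rw [getLast_eq_get]
    have hlen : (p.take (i+1)).length = i + 1 := by simp [List.length_take]; omega
    simp only [hlen]
    simp [List.getElem_take]
  · have hlen : (p.take (i+1)).length = i + 1 := by simp [List.length_take]; omega
    rw [hlen]
    exact Nat.odd_add_one.2 (by simp [Nat.even_iff, hpar])

lemma mem_OR_idx {p : List V} (hp : AltPath K F p) (ha : ¬ covered F (p.head hp.1))
    {i : ℕ} (hi : i < p.length) (hpar : i % 2 = 1) : p[i] ∈ ORset K F := by
  refine ⟨p.head hp.1, ha, p.take (i+1), ?_, altPath_take hp (by omega), ?_, ?_, ?_⟩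
  · have := List.length_pos_iff.2 hp.1
    exact List.ne_nil_of_length_pos (by simp [List.length_take]; omega)
  · exact head_take hp.1 (by omega)
  · rw [getLast_eq_get]
    have hlen : (p.take (i+1)).length = i + 1 := by simp [List.length_take]; omega
    simp only [hlen]
    simp [List.getElem_take]
  · have hlen : (p.take (i+1)).length = i + 1 := by simp [List.length_take]; omega
    rw [hlen]
    exact Nat.even_add_one.2 (by simp [Nat.odd_iff, hpar])

lemma mem_ER_getLast {p : List V} (hp : AltPath K F p) (ha : ¬ covered F (p.head hp.1))
    (hlen : Odd p.length) : p.getLast hp.1 ∈ ERset K F := by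
  rw [getLast_eq_get]
  exact mem_ER_idx hp ha (by have := List.length_pos_iff.2 hp.1; omega)
    (by rcases hlen with ⟨k, hk⟩; omega)

lemma mem_OR_getLast {p : List V} (hp : AltPath K F p) (ha : ¬ covered F (p.head hp.1))
    (hlen : Even p.length) : p.getLast hp.1 ∈ ORset K F := by
  rw [getLast_eq_get]
  have h0 := List.length_pos_iff.2 hp.1
  exact mem_OR_idx hp ha (by omega)
    (by rcases hlen with ⟨k, hk⟩; omega)

lemma OR_extend {p : List V} (hp : AltPath K F p) (ha : ¬ covered F (p.head hp.1))
    (hlen : Odd p.length) {z : V} (hz : z ∉ p)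
    (he : s(p.getLast hp.1, z) ∈ K) : z ∈ ORset K F := by
  have h0 := List.length_pos_iff.2 hp.1
  have hsnoc : AltPath K F (p ++ [z]) := by
    refine altPath_snoc hp hz ?_
    have hpar : (p.length - 1) % 2 = 0 := by rcases hlen with ⟨k, hk⟩; omega
    rw [hpar]
    simp only [if_pos rfl]
    rwa [getLast_eq_get] at he
  refine ⟨p.head hp.1, ha, p ++ [z], by simp, hsnoc, ?_, ?_, ?_⟩
  · exact head_snoc p z hp.1
  · exact getLast_snoc' p z
  · simp only [List.length_append, List.length_singleton]
    rcases hlen with ⟨k, hk⟩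
    exact ⟨k + 1, by omega⟩

lemma ER_extend {p : List V} (hp : AltPath K F p) (ha : ¬ covered F (p.head hp.1))
    (hlen : Even p.length) {z : V} (hz : z ∉ p)
    (he : s(p.getLast hp.1, z) ∈ F) : z ∈ ERset K F := by
  have h0 := List.length_pos_iff.2 hp.1
  have hsnoc : AltPath K F (p ++ [z]) := by
    refine altPath_snoc hp hz ?_
    have hpar : (p.length - 1) % 2 = 1 := by rcases hlen with ⟨k, hk⟩; omega
    rw [hpar]
    simp only [Nat.one_ne_zero, if_neg]
    · rwa [getLast_eq_get] at he
  refine ⟨p.head hp.1, ha, p ++ [z], by simp, hsnoc, ?_, ?_, ?_⟩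
  · exact head_snoc p z hp.1
  · exact getLast_snoc' p z
  · simp only [List.length_append, List.length_singleton]
    rcases hlen with ⟨k, hk⟩
    exact ⟨k, by omega⟩

lemma uncovered_mem_ER {a : V} (ha : ¬ covered F a) : a ∈ ERset K F :=
  ⟨a, ha, [a], by simp, altPath_singleton a, rfl, rfl, by simp⟩

section GE

variable {E F : Set (Sym2 V)} {Q R S : Set V}

lemma uncovered_mem_R (hGE : IsGE E F Q R S) {a : V} (ha : ¬ covered F a) : a ∈ R := by
  obtain ⟨hU, _, _, _, hQ, _, hS⟩ := hGE
  have hmem : a ∈ Q ∪ R ∪ S := hU ▸ Set.mem_univ a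
  rcases hmem with (hmem | hmem) | hmem
  · exact absurd (covered_of_edgesIn (hQ a hmem)) ha
  · exact hmem
  · obtain ⟨t, ht, _⟩ := hS a hmem
    exact absurd (covered_iff.2 ⟨t, ht⟩) ha

lemma comp_subset_R (hGE : IsGE E F Q R S) {v : V} (hv : v ∈ R) :
    comp (avoid E S) v ⊆ R := (hGE.2.2.2.2.2.1 v hv).1

lemma exposed_eq (hGE : IsGE E F Q R S) {v w w' : V} (hv : v ∈ R)
    (hw : w ∈ comp (avoid E S) v ∧ ¬ covered (edgesIn F (comp (avoid E S) v)) w)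
    (hw' : w' ∈ comp (avoid E S) v ∧ ¬ covered (edgesIn F (comp (avoid E S) v)) w') :
    w = w' := by
  obtain ⟨u, _, hu⟩ := (hGE.2.2.2.2.2.1 v hv).2.2
  rw [hu w hw, hu w' hw']

lemma edge_in_comp (hGE : IsGE E F Q R S) {v u w : V} (hv : v ∈ R)
    (hu : u ∈ comp (avoid E S) v) (he : s(u, w) ∈ E) (hwS : w ∉ S) :
    w ∈ comp (avoid E S) v := by
  have huR : u ∈ R := comp_subset_R hGE hv hu
  have huS : u ∉ S := fun h => (hGE.2.2.2.1).le_bot ⟨huR, h⟩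
  exact comp_tail hu ⟨he, sym2_forall.2 ⟨huS, hwS⟩⟩

lemma partner_in_comp {C : Set V} {v : V} (hcov : covered (edgesIn F C) v) :
    ∃ w ∈ C, s(v, w) ∈ F := by
  obtain ⟨w, hw⟩ := covered_iff.1 hcov
  exact ⟨w, hw.2 w (Sym2.mem_mk_right v w), hw.1⟩

lemma exposed_partner_S (hFE : F ⊆ E) (hGE : IsGE E F Q R S) {v w : V} (hv : v ∈ R)
    (hexp : ¬ covered (edgesIn F (comp (avoid E S) v)) v) (hvw : s(v, w) ∈ F) : w ∈ S := by
  by_contra hwS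
  have hw : w ∈ comp (avoid E S) v :=
    edge_in_comp hGE hv (mem_comp_self _ v) (hFE hvw) hwS
  exact hexp ⟨s(v, w), ⟨hvw, sym2_forall.2 ⟨mem_comp_self _ v, hw⟩⟩, Sym2.mem_mk_left v w⟩

lemma covered_in_comp_of_ne_exposed (hGE : IsGE E F Q R S) {v w : V} (hv : v ∈ R)
    (hw : w ∈ comp (avoid E S) v)
    (hexp : ¬ covered (edgesIn F (comp (avoid E S) v)) v)
    (hne : w ≠ v) : covered (edgesIn F (comp (avoid E S) v)) w := by
  by_contra hwc
  exact hne (exposed_eq hGE hv ⟨hw, hwc⟩ ⟨mem_comp_self _ v, hexp⟩)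

lemma uncovered_exposed {C : Set V} {a : V} (ha : ¬ covered F a) :
    ¬ covered (edgesIn F C) a := fun h => ha (covered_of_edgesIn h)

end GE
section Counting

variable [Fintype V]

lemma matching_covered_ncard {M : Set (Sym2 V)} (hM : IsMatching M) :
    {v | covered M v}.ncard = 2 * M.ncard := by
  classical
  set s : Finset (Sym2 V) := M.toFinset with hs
  set f : Sym2 V → Finset V := fun e => {v | v ∈ e}.toFinset with hf
  have hcov : {v | covered M v}.toFinset = s.biUnion f := by
    ext v
    rw [Set.mem_toFinset]
    simp [covered, hs, hf, Set.mem_toFinset]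
  have hdisj : ∀ e ∈ s, ∀ g ∈ s, e ≠ g → Disjoint (f e) (f g) := by
    intro e he g hg hne
    rw [Finset.disjoint_left]
    intro v hv hv'
    simp only [hf, Set.mem_toFinset, Set.mem_setOf_eq] at hv hv'
    exact hM.2 e (Set.mem_toFinset.1 he) g (Set.mem_toFinset.1 hg) hne v hv hv'
  have hcard2 : ∀ e ∈ s, (f e).card = 2 := by
    intro e he
    have hnd : ¬ e.IsDiag := hM.1 e (Set.mem_toFinset.1 he)
    induction e with
    | h a b =>
      have hab : a ≠ b := by
        intro h
        exact hnd (by simp [h, Sym2.isDiag_iff_proj_eq])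
      have : f s(a, b) = {a, b} := by
        ext v
        simp [hf, Set.mem_toFinset]
      rw [this, Finset.card_insert_of_notMem (by simp [hab]), Finset.card_singleton]
  rw [Set.ncard_eq_toFinset_card', hcov, Finset.card_biUnion hdisj,
    Finset.sum_congr rfl hcard2, Finset.sum_const, smul_eq_mul,
    Set.ncard_eq_toFinset_card']
  ring

lemma matching_uncovered_ncard {M : Set (Sym2 V)} (hM : IsMatching M) :
    {v | ¬ covered M v}.ncard = Fintype.card V - 2 * M.ncard := by
  have h1 : {v | ¬ covered M v} = {v | covered M v}ᶜ := rfl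
  have h2 := Set.ncard_add_ncard_compl {v | covered M v}
  rw [h1]
  rw [matching_covered_ncard hM] at h2
  have h3 : Nat.card V = Fintype.card V := Nat.card_eq_fintype_card
  omega

end Counting
lemma matching_subset {M N : Set (Sym2 V)} (hM : IsMatching M) (hNM : N ⊆ M) :
    IsMatching N :=
  ⟨fun e he => hM.1 e (hNM he), fun e he f hf => hM.2 e (hNM he) f (hNM hf)⟩

section L1

variable [Fintype V] {E F : Set (Sym2 V)} {Q R S : Set V}

lemma comp_ncard_odd (hGE : IsGE E F Q R S) {v : V} (hv : v ∈ R) :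
    Odd (comp (avoid E S) v).ncard := by
  classical
  set C := comp (avoid E S) v with hC
  obtain ⟨M₀, hM₀sub, hM₀m, hM₀v, hM₀cov⟩ :=
    (hGE.2.2.2.2.2.1 v hv).2.1 v (mem_comp_self _ v)
  have hcovset : {u | covered M₀ u} = C \ {v} := by
    ext u
    constructor
    · intro hu
      refine ⟨?_, ?_⟩
      · obtain ⟨e, he, hue⟩ := hu
        exact (hM₀sub he).2 u hue
      · intro h
        rw [Set.mem_singleton_iff] at h
        subst h
        exact hM₀v hu
    · rintro ⟨huC, hune⟩
      exact hM₀cov u huC (by simpa using hune)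
  have h2 := matching_covered_ncard hM₀m
  rw [hcovset] at h2
  have hvC : v ∈ C := mem_comp_self _ v
  have hCfin : C.Finite := Set.toFinite C
  have h3 : (C \ {v}).ncard + 1 = C.ncard := by
    rw [Set.ncard_diff_singleton_add_one hvC hCfin]
  exact ⟨M₀.ncard, by omega⟩

lemma comps_disjoint (hGE : IsGE E F Q R S) {r r' : V} (hr : r ∈ R)
    (hrx : ¬ covered (edgesIn F (comp (avoid E S) r)) r) (hr' : r' ∈ R)
    (hrx' : ¬ covered (edgesIn F (comp (avoid E S) r')) r') (hne : r ≠ r') :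
    Disjoint (comp (avoid E S) r) (comp (avoid E S) r') := by
  rw [Set.disjoint_left]
  intro u hu hu'
  have hceq : comp (avoid E S) r = comp (avoid E S) r' := by
    rw [← comp_eq_of_mem hu, ← comp_eq_of_mem hu']
  have hr'mem : r' ∈ comp (avoid E S) r := hceq ▸ mem_comp_self _ r'
  exact hne (exposed_eq hGE hr ⟨mem_comp_self _ r, hrx⟩ ⟨hr'mem, by rwa [hceq]⟩)

lemma comp_all_covered (hGE : IsGE E F Q R S) {M : Set (Sym2 V)} (hME : M ⊆ E)
    (hMm : IsMatching M) {v : V} (hv : v ∈ R)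
    (hall : ∀ u ∈ comp (avoid E S) v, covered M u) :
    ∃ w ∈ S, ∃ u ∈ comp (avoid E S) v, s(u, w) ∈ M := by
  classical
  by_contra hno
  push_neg at hno
  set C := comp (avoid E S) v with hC
  set M' := edgesIn M C with hM'
  have hM'm : IsMatching M' := matching_subset hMm (fun e he => he.1)
  have hcov' : {u | covered M' u} = C := by
    ext u
    constructor
    · rintro ⟨e, he, hue⟩
      exact he.2 u hue
    · intro huC
      obtain ⟨w, hw⟩ := covered_iff.1 (hall u huC)
      have hwC : w ∈ C := by
        by_cases hwS : w ∈ S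
        · exact absurd hw (hno w hwS u huC)
        · exact edge_in_comp hGE hv huC (hME hw) hwS
      exact ⟨s(u, w), ⟨hw, sym2_forall.2 ⟨huC, hwC⟩⟩, Sym2.mem_mk_left u w⟩
  have h2 := matching_covered_ncard hM'm
  rw [hcov'] at h2
  have hodd := comp_ncard_odd hGE hv
  rw [← hC] at hodd
  obtain ⟨k, hk⟩ := hodd
  omega

lemma max_matching_uncovered_subset_R (hF : IsMaxMatching E F) (hGE : IsGE E F Q R S)
    {M : Set (Sym2 V)} (hME : M ⊆ E) (hMm : IsMatching M) (hMcard : F.ncard ≤ M.ncard) :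
    {v | ¬ covered M v} ⊆ R := by
  classical
  set UF := {v : V | ¬ covered F v} with hUF
  set UM := {v : V | ¬ covered M v} with hUM
  set X := {r : V | r ∈ R ∧ ¬ covered (edgesIn F (comp (avoid E S) r)) r} with hX
  -- lower bound: |UF| + |S| ≤ |X|
  have hUFX : UF ⊆ X := fun a ha =>
    ⟨uncovered_mem_R hGE ha, uncovered_exposed ha⟩
  set g : V → V := fun s => if h : ∃ t, s(s, t) ∈ F ∧ t ∈ R ∧
      ¬ covered (edgesIn F (comp (avoid E S) t)) t then h.choose else s with hg
  have hgspec : ∀ s ∈ S, s(s, g s) ∈ F ∧ g s ∈ R ∧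
      ¬ covered (edgesIn F (comp (avoid E S) (g s))) (g s) := by
    intro s hs
    have h := hGE.2.2.2.2.2.2 s hs
    rw [hg]
    simp only [dif_pos h]
    exact h.choose_spec
  have hgX : ∀ s ∈ S, g s ∈ X := fun s hs => ⟨(hgspec s hs).2.1, (hgspec s hs).2.2⟩
  have hginj : Set.InjOn g S := by
    intro s hs s' hs' heq
    have h1 := (hgspec s hs).1
    have h2 := (hgspec s' hs').1
    rw [heq] at h1
    have h1' : s(g s', s) ∈ F := by rwa [Sym2.eq_swap] at h1
    have h2' : s(g s', s') ∈ F := by rwa [Sym2.eq_swap] at h2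
    exact matching_unique hF.2.1 h1' h2'
  have hgdisj : Disjoint UF (g '' S) := by
    rw [Set.disjoint_left]
    rintro a ha ⟨s, hs, rfl⟩
    have h1 := (hgspec s hs).1
    rw [Sym2.eq_swap] at h1
    exact ha (covered_iff.2 ⟨s, h1⟩)
  have hlow : UF.ncard + S.ncard ≤ X.ncard := by
    have h1 : UF ∪ g '' S ⊆ X := Set.union_subset hUFX (by
      rintro a ⟨s, hs, rfl⟩
      exact hgX s hs)
    have h2 : (UF ∪ g '' S).ncard = UF.ncard + (g '' S).ncard :=
      Set.ncard_union_eq hgdisj (Set.toFinite _) (Set.toFinite _)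
    have h3 : (g '' S).ncard = S.ncard := Set.ncard_image_of_injOn hginj
    have h4 : (UF ∪ g '' S).ncard ≤ X.ncard := Set.ncard_le_ncard h1 (Set.toFinite _)
    omega
  -- upper bound: |X| ≤ |UM ∩ R| + |S|
  set f : V → V := fun r =>
    if h : ∃ u, u ∈ comp (avoid E S) r ∧ ¬ covered M u then h.choose
    else if h2 : ∃ w, w ∈ S ∧ ∃ u ∈ comp (avoid E S) r, s(u, w) ∈ M then h2.choose
    else r with hf
  have hfspec : ∀ r ∈ X, (f r ∈ UM ∩ R ∧ f r ∈ comp (avoid E S) r) ∨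
      (f r ∈ S ∧ ∃ u ∈ comp (avoid E S) r, s(u, f r) ∈ M) := by
    intro r hr
    by_cases h : ∃ u, u ∈ comp (avoid E S) r ∧ ¬ covered M u
    · left
      have hspec := h.choose_spec
      rw [hf]
      simp only [dif_pos h]
      exact ⟨⟨hspec.2, comp_subset_R hGE hr.1 hspec.1⟩, hspec.1⟩
    · right
      have h' : ∀ u ∈ comp (avoid E S) r, covered M u := by
        intro u hu
        by_contra hc
        exact h ⟨u, hu, hc⟩
      obtain ⟨w, hwS, hwu⟩ := comp_all_covered hGE hME hMm hr.1 h'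
      have h2 : ∃ w, w ∈ S ∧ ∃ u ∈ comp (avoid E S) r, s(u, w) ∈ M := ⟨w, hwS, hwu⟩
      rw [hf]
      simp only [dif_neg h, dif_pos h2]
      exact h2.choose_spec
  have hfinj : Set.InjOn f X := by
    intro r hr r' hr' heq
    by_contra hne
    have hdisj := comps_disjoint hGE hr.1 hr.2 hr'.1 hr'.2 hne
    rcases hfspec r hr with ⟨hm, hc⟩ | ⟨hs, u, hu, hum⟩ <;>
      rcases hfspec r' hr' with ⟨hm', hc'⟩ | ⟨hs', u', hu', hum'⟩
    · exact hdisj.le_bot ⟨hc, heq ▸ hc'⟩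
    · exact (hGE.2.2.2.1).le_bot ⟨hm.2, heq ▸ hs'⟩
    · exact (hGE.2.2.2.1).le_bot ⟨hm'.2, heq ▸ hs⟩
    · rw [heq] at hum
      have h1 : s(f r', u) ∈ M := by rwa [Sym2.eq_swap] at hum
      have h2 : s(f r', u') ∈ M := by rwa [Sym2.eq_swap] at hum'
      have : u = u' := matching_unique hMm h1 h2
      exact hdisj.le_bot ⟨hu, this ▸ hu'⟩
  have hhigh : X.ncard ≤ (UM ∩ R).ncard + S.ncard := by
    have h1 : f '' X ⊆ (UM ∩ R) ∪ S := by
      rintro a ⟨r, hr, rfl⟩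
      rcases hfspec r hr with ⟨hm, _⟩ | ⟨hs, _⟩
      · exact Or.inl hm
      · exact Or.inr hs
    calc X.ncard = (f '' X).ncard := (Set.ncard_image_of_injOn hfinj).symm
      _ ≤ ((UM ∩ R) ∪ S).ncard := Set.ncard_le_ncard h1 (Set.toFinite _)
      _ ≤ (UM ∩ R).ncard + S.ncard := Set.ncard_union_le _ _
  -- cardinalities equal
  have hMF : M.ncard = F.ncard := le_antisymm (hF.2.2 M hME hMm) hMcard
  have hUMcard : UM.ncard = UF.ncard := by
    rw [hUM, hUF, matching_uncovered_ncard hMm, matching_uncovered_ncard hF.2.1, hMF]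
  have hsub : UM ∩ R ⊆ UM := Set.inter_subset_left
  have hfinal : UM ∩ R = UM := by
    apply Set.eq_of_subset_of_ncard_le hsub (by omega) (Set.toFinite _)
  intro v hv
  rw [← hfinal] at hv
  exact hv.2

end L1
section Flip

variable [Fintype V] {E F : Set (Sym2 V)}

lemma flip_lemma (hE : ∀ e ∈ E, ¬ e.IsDiag) (hFE : F ⊆ E) (hFm : IsMatching F)
    {p : List V} (hp : AltPath (E \ F) F p) (ha : ¬ covered F (p.head hp.1))
    (hlen : Odd p.length) :
    ∃ M ⊆ E, IsMatching M ∧ F.ncard ≤ M.ncard ∧ ¬ covered M (p.getLast hp.1) := by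
  classical
  obtain ⟨hne, hnd, halt⟩ := hp
  set n := p.length with hn
  have hn0 : 0 < n := List.length_pos_iff.2 hne
  obtain ⟨m, hm⟩ := hlen
  set q : ℕ → V := fun i => p.getD i (p.head hne) with hq
  have hqe : ∀ i (h : i < n), q i = p[i] := by
    intro i h
    rw [hq]
    exact List.getD_eq_getElem p _ h
  have hinj : ∀ i j, i < n → j < n → q i = q j → i = j := by
    intro i j hi hj hij
    rw [hqe i hi, hqe j hj] at hij
    exact (List.Nodup.getElem_inj_iff hnd).1 hij
  set ed : ℕ → Sym2 V := fun i => s(q i, q (i + 1)) with hed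
  have hedK : ∀ i, i + 1 < n → i % 2 = 0 → ed i ∈ E \ F := by
    intro i h hi
    have := halt i h
    rw [if_pos hi] at this
    rw [hed]
    simp only
    rw [hqe i (by omega), hqe (i+1) h]
    exact this
  have hedF : ∀ i, i + 1 < n → i % 2 = 1 → ed i ∈ F := by
    intro i h hi
    have := halt i h
    rw [if_neg (by omega)] at this
    rw [hed]
    simp only
    rw [hqe i (by omega), hqe (i+1) h]
    exact this
  have hhead : p.head hne = q 0 := by rw [hqe 0 hn0, head_eq_get]
  have hlast : p.getLast hne = q (n - 1) := by
    rw [hqe (n-1) (by omega), getLast_eq_get]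
  -- membership in an edge
  have hmem_ed : ∀ v i, v ∈ ed i → v = q i ∨ v = q (i + 1) := by
    intro v i hv
    rw [hed] at hv
    simpa using hv
  set Podd : Set (Sym2 V) := ed '' {i | i % 2 = 1 ∧ i + 1 < n} with hPodd
  set Peven : Set (Sym2 V) := ed '' {i | i % 2 = 0 ∧ i + 1 < n} with hPeven
  have hPoddF : Podd ⊆ F := by
    rintro e ⟨i, ⟨hi1, hi2⟩, rfl⟩
    exact hedF i hi2 hi1
  have hPevenK : Peven ⊆ E \ F := by
    rintro e ⟨i, ⟨hi1, hi2⟩, rfl⟩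
    exact hedK i hi2 hi1
  have hedinj : ∀ i j, i + 1 < n → j + 1 < n → ed i = ed j → i = j := by
    intro i j hi hj hij
    rw [hed] at hij
    simp only [Sym2.eq_iff] at hij
    rcases hij with ⟨h1, _⟩ | ⟨h1, h2⟩
    · exact hinj i j (by omega) (by omega) h1
    · have e1 : i = j + 1 := hinj i (j+1) (by omega) hj h1
      have e2 : i + 1 = j := hinj (i+1) j hi (by omega) h2
      omega
  set M : Set (Sym2 V) := (F \ Podd) ∪ Peven with hM
  have hME : M ⊆ E := by
    rintro e (he | he)
    · exact hFE he.1
    · exact (hPevenK he).1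
  -- cardinalities
  have hcard_odd : Podd.ncard = m := by
    rw [hPodd, Set.ncard_image_of_injOn (fun i hi j hj hij =>
      hedinj i j hi.2 hj.2 hij)]
    have : {i | i % 2 = 1 ∧ i + 1 < n} = (fun k => 2 * k + 1) '' {k | k < m} := by
      ext i
      simp only [Set.mem_setOf_eq, Set.mem_image]
      constructor
      · rintro ⟨h1, h2⟩
        exact ⟨i / 2, by omega, by omega⟩
      · rintro ⟨k, hk, rfl⟩
        omega
    rw [this, Set.ncard_image_of_injOn (fun a _ b _ h => by omega)]
    have hr : {k : ℕ | k < m} = ↑(Finset.range m) := by ext; simp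
    rw [hr, Set.ncard_coe_finset, Finset.card_range]
  have hcard_even : Peven.ncard = m := by
    rw [hPeven, Set.ncard_image_of_injOn (fun i hi j hj hij =>
      hedinj i j hi.2 hj.2 hij)]
    have : {i | i % 2 = 0 ∧ i + 1 < n} = (fun k => 2 * k) '' {k | k < m} := by
      ext i
      simp only [Set.mem_setOf_eq, Set.mem_image]
      constructor
      · rintro ⟨h1, h2⟩
        exact ⟨i / 2, by omega, by omega⟩
      · rintro ⟨k, hk, rfl⟩
        omega
    rw [this, Set.ncard_image_of_injOn (fun a _ b _ h => by omega)]
    have hr : {k : ℕ | k < m} = ↑(Finset.range m) := by ext; simp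
    rw [hr, Set.ncard_coe_finset, Finset.card_range]
  have hcardM : M.ncard = F.ncard := by
    have hdisj : Disjoint (F \ Podd) Peven := by
      rw [Set.disjoint_left]
      intro e he he'
      exact (hPevenK he').2 he.1
    rw [hM, Set.ncard_union_eq hdisj (Set.toFinite _) (Set.toFinite _),
      Set.ncard_diff hPoddF (Set.toFinite _), hcard_odd, hcard_even]
    have : Podd.ncard ≤ F.ncard := Set.ncard_le_ncard hPoddF (Set.toFinite _)
    rw [hcard_odd] at this
    omega
  -- key: an even path-edge and an F-edge not on the path cannot share a vertex
  have hkey : ∀ i, i % 2 = 0 → i + 1 < n → ∀ f ∈ F \ Podd, ∀ v, v ∈ ed i → v ∈ f → False := by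
    intro i hi2 hi1 f hf v hv hvf
    rcases hmem_ed v i hv with rfl | rfl
    · by_cases hi0 : i = 0
      · subst hi0
        exact ha ⟨f, hf.1, by rwa [hhead]⟩
      · have hprev : ed (i - 1) ∈ F := hedF (i-1) (by omega) (by omega)
        have hvprev : q i ∈ ed (i - 1) := by
          have h' : ed (i - 1) = s(q (i - 1), q (i - 1 + 1)) := rfl
          rw [h', show i - 1 + 1 = i by omega]
          exact Sym2.mem_mk_right _ _
        by_cases hfe : f = ed (i - 1)
        · exact hf.2 (hfe ▸ ⟨i - 1, ⟨by omega, by omega⟩, rfl⟩)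
        · exact hFm.2 f hf.1 _ hprev hfe _ hvf hvprev
    · have hnext : ed (i + 1) ∈ F := by
        refine hedF (i+1) ?_ (by omega)
        -- i+1 < n and i+1 odd; since n-1 is even, i+1 ≠ n-1, so i+2 < n
        have : i + 1 ≠ n - 1 := by omega
        omega
      have hvnext : q (i + 1) ∈ ed (i + 1) := Sym2.mem_mk_left _ _
      by_cases hfe : f = ed (i + 1)
      · exact hf.2 (hfe ▸ ⟨i + 1, ⟨by omega, by omega⟩, rfl⟩)
      · exact hFm.2 f hf.1 _ hnext hfe _ hvf hvnext
  have hMm : IsMatching M := by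
    constructor
    · rintro e (he | he)
      · exact hFm.1 e he.1
      · exact hE e ((hPevenK he).1)
    · rintro e (he | he) f (hf | hf) hef v hve hvf
      · exact hFm.2 e he.1 f hf.1 hef v hve hvf
      · obtain ⟨j, ⟨hj1, hj2⟩, rfl⟩ := hf
        exact hkey j hj1 hj2 e he v hvf hve
      · obtain ⟨i, ⟨hi1, hi2⟩, rfl⟩ := he
        exact hkey i hi1 hi2 f hf v hve hvf
      · obtain ⟨i, ⟨hi1, hi2⟩, rfl⟩ := he
        obtain ⟨j, ⟨hj1, hj2⟩, rfl⟩ := hf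
        have hij : i ≠ j := fun h => hef (by rw [h])
        rcases hmem_ed v i hve with h1 | h1 <;> rcases hmem_ed v j hvf with h2 | h2
        · exact hij (hinj i j (by omega) (by omega) (by rw [← h1]; exact h2))
        · have : i = j + 1 := hinj i (j+1) (by omega) hj2 (by rw [← h1]; exact h2)
          omega
        · have : i + 1 = j := hinj (i+1) j hi2 (by omega) (by rw [← h1]; exact h2)
          omega
        · have : i + 1 = j + 1 := hinj (i+1) (j+1) hi2 hj2 (by rw [← h1]; exact h2)
          omega
  refine ⟨M, hME, hMm, by omega, ?_⟩
  -- last vertex uncovered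
  rintro ⟨e, (he | he), hve⟩
  · rw [hlast] at hve
    by_cases hn1 : n = 1
    · refine ha ⟨e, he.1, ?_⟩
      rw [hhead]
      have : (0 : ℕ) = n - 1 := by omega
      rwa [this]
    · have hprev : ed (n - 2) ∈ F := hedF (n-2) (by omega) (by omega)
      have hvprev : q (n - 1) ∈ ed (n - 2) := by
        have h' : ed (n - 2) = s(q (n - 2), q (n - 2 + 1)) := rfl
        rw [h', show n - 2 + 1 = n - 1 by omega]
        exact Sym2.mem_mk_right _ _
      by_cases hfe : e = ed (n - 2)
      · exact he.2 (hfe ▸ ⟨n - 2, ⟨by omega, by omega⟩, rfl⟩)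
      · exact hFm.2 e he.1 _ hprev hfe _ hve hvprev
  · obtain ⟨i, ⟨hi1, hi2⟩, rfl⟩ := he
    rw [hlast] at hve
    rcases hmem_ed _ i hve with h1 | h1
    · have : n - 1 = i := hinj (n-1) i (by omega) (by omega) h1
      omega
    · have : n - 1 = i + 1 := hinj (n-1) (i+1) (by omega) hi2 h1
      omega

end Flip
section Invariants

variable [Fintype V] {E F : Set (Sym2 V)} {Q R S : Set V}

lemma ER_subset_R (hE : ∀ e ∈ E, ¬ e.IsDiag) (hF : IsMaxMatching E F)
    (hGE : IsGE E F Q R S) : ERset (E \ F) F ⊆ R := by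
  rintro x ⟨a, ha, p, hp, halt, hhead, hlast, hodd⟩
  have ha' : ¬ covered F (p.head halt.1) := by rwa [hhead]
  obtain ⟨M, hME, hMm, hcard, hMx⟩ := flip_lemma hE hF.1 hF.2.1 halt ha' hodd
  refine max_matching_uncovered_subset_R hF hGE hME hMm hcard ?_
  rwa [hlast] at hMx

lemma mem_R_or_S (hGE : IsGE E F Q R S) {v : V} (hv : v ∉ Q) : v ∈ R ∨ v ∈ S := by
  have : v ∈ Q ∪ R ∪ S := hGE.1 ▸ Set.mem_univ v
  rcases this with (h | h) | h
  · exact absurd h hv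
  · exact Or.inl h
  · exact Or.inr h

lemma not_mem_take {p : List V} {z : V} {k : ℕ} (hk : k ≤ p.length)
    (h : ∀ j (hj : j < k), p[j]'(by omega) ≠ z) : z ∉ p.take k := by
  intro hz
  obtain ⟨j, hj, hje⟩ := List.mem_iff_getElem.1 hz
  have hjk : j < k := by
    have := @List.length_take _ k p
    omega
  have : (p.take k)[j] = p[j]'(by omega) := by simp [List.getElem_take]
  exact h j hjk (by rw [← this, hje])

lemma path_not_Q (hE : ∀ e ∈ E, ¬ e.IsDiag) (hF : IsMaxMatching E F)
    (hGE : IsGE E F Q R S) {p : List V} (hp : AltPath (E \ F) F p)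
    (ha : ¬ covered F (p.head hp.1)) :
    ∀ i, ∀ hi : i < p.length, p[i] ∉ Q := by
  intro i
  induction i using Nat.strong_induction_on with
  | _ i IH =>
    intro hi hiQ
    by_cases hpar : i % 2 = 0
    · have : p[i] ∈ ERset (E \ F) F := mem_ER_idx hp ha hi hpar
      exact (hGE.2.1).le_bot ⟨hiQ, ER_subset_R hE hF hGE this⟩
    · -- odd position in Q: extend by the F-partner inside Q
      obtain ⟨z, hzQ, hz⟩ := partner_in_comp (hGE.2.2.2.2.1 _ hiQ)
      have hq : AltPath (E \ F) F (p.take (i+1)) := altPath_take hp (by omega)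
      have hqhead : ¬ covered F ((p.take (i+1)).head hq.1) := by
        rw [head_take hp.1 (by omega)]
        exact ha
      have hqlen : Even (p.take (i+1)).length := by
        rw [List.length_take]
        have : min (i+1) p.length = i + 1 := by omega
        rw [this]
        exact Nat.even_add_one.2 (by simpa [Nat.even_iff] using hpar)
      have hzne : z ∉ p.take (i+1) := by
        refine not_mem_take (by omega) ?_
        intro j hj hje
        subst hje
        by_cases hj2 : j = i
        · subst hj2
          exact matching_ne hF.2.1 hz rfl
        · by_cases hjpar : j % 2 = 0
          · have : p[j]'(by omega) ∈ ERset (E \ F) F := mem_ER_idx hp ha (by omega) hjpar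
            exact (hGE.2.1).le_bot ⟨hzQ, ER_subset_R hE hF hGE this⟩
          · exact IH j (by omega) (by omega) hzQ
      have hqlast : (p.take (i+1)).getLast hq.1 = p[i] := by
        rw [getLast_eq_get]
        have hl : (p.take (i+1)).length = i + 1 := by
          rw [List.length_take]; omega
        simp only [hl]
        simp [List.getElem_take]
      have : z ∈ ERset (E \ F) F := by
        refine ER_extend hq hqhead hqlen hzne ?_
        rw [hqlast]
        exact hz
      exact (hGE.2.1).le_bot ⟨hzQ, ER_subset_R hE hF hGE this⟩

lemma path_invariant (hE : ∀ e ∈ E, ¬ e.IsDiag) (hF : IsMaxMatching E F)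
    (hGE : IsGE E F Q R S) {p : List V} (hp : AltPath (E \ F) F p)
    (ha : ¬ covered F (p.head hp.1)) :
    ∀ i, ∀ hi : i < p.length,
      (i % 2 = 1 → p[i] ∈ S ∨ (p[i] ∈ R ∧
        covered (edgesIn F (comp (avoid E S) p[i])) p[i])) ∧
      (p[i] ∈ R → ∃ j, j ≤ i ∧ ∃ hj : j < p.length,
        p[j] ∈ comp (avoid E S) p[i] ∧
        ¬ covered (edgesIn F (comp (avoid E S) p[i])) (p[j]'hj)) := by
  have hnd := hp.2.1
  intro i
  induction i using Nat.strong_induction_on with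
  | _ i IH =>
    intro hi
    rcases Nat.eq_zero_or_pos i with rfl | hi0
    · refine ⟨by omega, ?_⟩
      intro _
      have h0 : ¬ covered F (p[0]'(by omega)) := by rwa [head_eq_get] at ha
      exact ⟨0, le_refl 0, by omega, mem_comp_self _ _, uncovered_exposed h0⟩
    · have hi1 : i - 1 < p.length := by omega
      have hiQ : p[i] ∉ Q := path_not_Q hE hF hGE hp ha i hi
      by_cases hpar : i % 2 = 1
      · -- odd position: predecessor even, K-edge
        have hxER : p[i-1]'hi1 ∈ ERset (E \ F) F :=
          mem_ER_idx hp ha hi1 (by omega)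
        have hxR : p[i-1]'hi1 ∈ R := ER_subset_R hE hF hGE hxER
        have hedge : s(p[i-1]'hi1, p[i]) ∈ E \ F := by
          have h := hp.2.2 (i-1) (by omega)
          rw [if_pos (by omega : (i-1) % 2 = 0)] at h
          have he : i - 1 + 1 = i := by omega
          simp only [he] at h
          exact h
        rcases mem_R_or_S hGE hiQ with hiR | hiS
        · -- in R: same component as predecessor
          have hiS' : p[i] ∉ S := fun h => (hGE.2.2.2.1).le_bot ⟨hiR, h⟩
          have hcomp : p[i] ∈ comp (avoid E S) (p[i-1]'hi1) :=
            edge_in_comp hGE hxR (mem_comp_self _ _) hedge.1 hiS'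
          have hceq : comp (avoid E S) (p[i]) = comp (avoid E S) (p[i-1]'hi1) :=
            comp_eq_of_mem hcomp
          obtain ⟨j, hjle, hj, hjmem, hjexp⟩ := (IH (i-1) (by omega) hi1).2 hxR
          have hP3 : ∃ j, j ≤ i ∧ ∃ hj : j < p.length,
              p[j] ∈ comp (avoid E S) p[i] ∧
              ¬ covered (edgesIn F (comp (avoid E S) p[i])) (p[j]'hj) := by
            exact ⟨j, by omega, hj, by rw [hceq]; exact hjmem, by rw [hceq]; exact hjexp⟩
          refine ⟨fun _ => Or.inr ⟨hiR, ?_⟩, fun _ => hP3⟩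
          by_contra hiexp
          have : p[i] = p[j]'hj :=
            exposed_eq hGE hiR ⟨mem_comp_self _ _, hiexp⟩
              ⟨by rw [← hceq] at hjmem; exact hjmem, by rw [← hceq] at hjexp; exact hjexp⟩
          have hij : i = j := (List.Nodup.getElem_inj_iff hnd).1 this
          omega
        · exact ⟨fun _ => Or.inl hiS, fun h => absurd h
            (fun h' => (hGE.2.2.2.1).le_bot ⟨h', hiS⟩)⟩
      · -- even position (i ≥ 1): predecessor odd, F-edge
        refine ⟨by omega, ?_⟩
        intro hiR
        have hedge : s(p[i-1]'hi1, p[i]) ∈ F := by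
          have h := hp.2.2 (i-1) (by omega)
          rw [if_neg (by omega : ¬ (i-1) % 2 = 0)] at h
          have he : i - 1 + 1 = i := by omega
          simp only [he] at h
          exact h
        rcases (IH (i-1) (by omega) hi1).1 (by omega) with hwS | ⟨hwR, hwcov⟩
        · -- predecessor in S: p[i] is its exposed partner
          obtain ⟨t, hts, htR, htexp⟩ := hGE.2.2.2.2.2.2 _ hwS
          have : p[i] = t := matching_unique hF.2.1 hedge hts
          subst this
          exact ⟨i, le_refl i, hi, mem_comp_self _ _, htexp⟩
        · -- predecessor in R covered in its component
          obtain ⟨w, hwmem, hww⟩ := partner_in_comp hwcov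
          have : w = p[i] := matching_unique hF.2.1 hww hedge
          subst this
          have hceq : comp (avoid E S) (p[i]) = comp (avoid E S) (p[i-1]'hi1) :=
            comp_eq_of_mem hwmem
          obtain ⟨j, hjle, hj, hjmem, hjexp⟩ := (IH (i-1) (by omega) hi1).2 hwR
          exact ⟨j, by omega, hj, by rw [hceq]; exact hjmem, by rw [hceq]; exact hjexp⟩

end Invariants
lemma getElem_idx_congr (p : List V) {i j : ℕ} (h : i = j) (hi : i < p.length) :
    p[i] = p[j]'(h ▸ hi) := by subst h; rfl

lemma altPath_mono {K K' F F' : Set (Sym2 V)} {p : List V} (hK : K ⊆ K') (hF : F ⊆ F')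
    (h : AltPath K F p) : AltPath K' F' p := by
  refine ⟨h.1, h.2.1, ?_⟩
  intro i hi
  have := h.2.2 i hi
  by_cases hpar : i % 2 = 0
  · rw [if_pos hpar] at this ⊢
    exact hK this
  · rw [if_neg hpar] at this ⊢
    exact hF this

section Walk

variable [Fintype V] {C : Set V} {FC N : Set (Sym2 V)} {r v : V}

lemma walk_aux (hFm : IsMatching FC) (hNm : IsMatching N)
    (hFCin : ∀ e ∈ FC, ∀ u ∈ e, u ∈ C) (hNin : ∀ e ∈ N, ∀ u ∈ e, u ∈ C)
    (hNcov : ∀ u ∈ C, u ≠ v → covered N u)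
    (hFCr : ¬ covered FC r) (hFCcov : ∀ u ∈ C, u ≠ r → covered FC u) :
    ∀ k : ℕ, ∀ p : List V, ∀ hp : AltPath (N \ FC) (FC \ N) p,
      p.head hp.1 = r → Odd p.length → (∀ u ∈ p, u ∈ C) →
      Fintype.card V ≤ p.length + k →
      p.getLast hp.1 = v ∨
      ∃ q, ∃ hq : AltPath (N \ FC) (FC \ N) q, q.head hq.1 = r ∧ q.getLast hq.1 = v ∧
        Odd q.length ∧ ∀ u ∈ q, u ∈ C := by
  classical
  intro k
  induction k using Nat.strong_induction_on with
  | _ k IH =>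
    intro p hp hhead hlen hpC hcard
    set n := p.length with hn
    have hn0 : 0 < n := List.length_pos_iff.2 hp.1
    have hnd := hp.2.1
    set w := p.getLast hp.1 with hw
    by_cases hwv : w = v
    · exact Or.inl hwv
    · right
      have hwget : w = p[n-1]'(by omega) := getLast_eq_get hp.1
      have hwC : w ∈ C := hpC w (List.getLast_mem hp.1)
      -- N-edge at w
      obtain ⟨u, hu⟩ := covered_iff.1 (hNcov w hwC hwv)
      have hwu : w ≠ u := matching_ne hNm hu
      have heFC : s(w, u) ∉ FC := by
        intro heF
        rcases Nat.lt_or_ge 1 n with h1n | h1n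
        · -- n ≥ 3 (n odd, n > 1): last path edge is in FC \ N
          have hlast_edge := hp.2.2 (n-2) (by omega)
          rw [if_neg (by rcases hlen with ⟨m, hm⟩; omega)] at hlast_edge
          have he2 : n - 2 + 1 = n - 1 := by omega
          simp only [he2] at hlast_edge
          -- both s(w,u) and s(p[n-2], w) are FC edges at w
          have h1 : s(w, u) ∈ FC := heF
          have h2 : s(w, p[n-2]'(by omega)) ∈ FC := by
            have := hlast_edge.1
            rwa [Sym2.eq_swap, ← hwget] at this
          have : u = p[n-2]'(by omega) := matching_unique hFm h1 h2
          rw [this] at h1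
          have : s(p[n-2]'(by omega), w) ∈ N := by
            rw [Sym2.eq_swap, ← this]
            exact hu
          rw [hwget] at this
          exact hlast_edge.2 this
        · -- n = 1 : w = r, but r is FC-uncovered
          have : n = 1 := by omega
          have hwr : w = r := by
            rw [hwget, ← hhead, head_eq_get]
            congr 1
            omega
          exact hFCr ⟨s(w, u), heF, by rw [← hwr]; exact Sym2.mem_mk_left _ _⟩
      have huN : s(u, w) ∈ N := by rwa [Sym2.eq_swap] at hu
      -- u is not on p
      have hup : u ∉ p := by
        intro hmem
        obtain ⟨j, hj, hje⟩ := List.mem_iff_getElem.1 hmem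
        by_cases hj0 : j = 0
        · subst hj0
          rcases Nat.lt_or_ge 1 n with h1n | h1n
          · have hfirst := hp.2.2 0 (by omega)
            rw [if_pos (by omega)] at hfirst
            have h2 : s(u, p[1]'(by omega)) ∈ N := by
              rw [← hje]
              exact hfirst.1
            have : w = p[1]'(by omega) := matching_unique hNm huN h2
            rw [hwget] at this
            have : n - 1 = 1 := (List.Nodup.getElem_inj_iff hnd).1 this
            rcases hlen with ⟨m, hm⟩
            omega
          · -- n = 1: u = p[0] = w
            have : u = w := by
              rw [← hje, hwget]
              congr 1
              omega
            exact hwu this.symm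
        · by_cases hjpar : j % 2 = 1
          · have hprev := hp.2.2 (j-1) (by omega)
            rw [if_pos (by omega)] at hprev
            have he2 : j - 1 + 1 = j := by omega
            simp only [he2] at hprev
            have h2 : s(u, p[j-1]'(by omega)) ∈ N := by
              rw [← hje]
              rw [Sym2.eq_swap]
              exact hprev.1
            have : w = p[j-1]'(by omega) := matching_unique hNm huN h2
            rw [hwget] at this
            have hidx : n - 1 = j - 1 := (List.Nodup.getElem_inj_iff hnd).1 this
            omega
          · -- j even, j ≥ 1
            have hjn : j ≠ n - 1 := by
              intro h
              apply hwu
              rw [hwget, ← hje]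
              exact getElem_idx_congr p (by omega) (by omega)
            have hnext := hp.2.2 j (by omega)
            rw [if_pos (by omega)] at hnext
            have h2 : s(u, p[j+1]'(by omega)) ∈ N := by
              rw [← hje]
              exact hnext.1
            have : w = p[j+1]'(by omega) := matching_unique hNm huN h2
            rw [hwget] at this
            have hidx : n - 1 = j + 1 := (List.Nodup.getElem_inj_iff hnd).1 this
            rcases hlen with ⟨m, hm⟩
            omega
      -- extend p by u
      have hp1 : AltPath (N \ FC) (FC \ N) (p ++ [u]) := by
        refine altPath_snoc hp hup ?_
        rw [if_pos (by rcases hlen with ⟨m, hm⟩; omega)]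
        rw [← hwget]
        exact ⟨hu, heFC⟩
      have huC : u ∈ C := hNin _ hu u (Sym2.mem_mk_right _ _)
      have hur : u ≠ r := by
        intro h
        apply hup
        rw [h, ← hhead]
        exact List.head_mem hp.1
      -- FC-edge at u
      obtain ⟨z, hz⟩ := covered_iff.1 (hFCcov u huC hur)
      have huz : u ≠ z := matching_ne hFm hz
      have hzN : s(u, z) ∉ N := by
        intro hn'
        have : z = w := matching_unique hNm hn' huN
        rw [this] at hz
        exact heFC (by rwa [Sym2.eq_swap] at hz)
      -- z is not on p ++ [u]
      have hzp : z ∉ p ++ [u] := by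
        intro hmem
        rcases List.mem_append.1 hmem with hmem | hmem
        · obtain ⟨j, hj, hje⟩ := List.mem_iff_getElem.1 hmem
          by_cases hj0 : j = 0
          · subst hj0
            apply hFCr
            refine ⟨s(u, z), hz, ?_⟩
            rw [← hje, ← hhead, head_eq_get]
            exact Sym2.mem_mk_right _ _
          · have hzu : s(z, u) ∈ FC := by rwa [Sym2.eq_swap] at hz
            by_cases hjpar : j % 2 = 1
            · have hjn : j ≠ n - 1 := by
                rcases hlen with ⟨m, hm⟩
                omega
              have hnext := hp.2.2 j (by omega)
              rw [if_neg (by omega)] at hnext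
              have h2 : s(z, p[j+1]'(by omega)) ∈ FC := by
                rw [← hje]
                exact hnext.1
              have : u = p[j+1]'(by omega) := matching_unique hFm hzu h2
              exact hup (this ▸ List.getElem_mem _)
            · have hprev := hp.2.2 (j-1) (by omega)
              rw [if_neg (by omega)] at hprev
              have he2 : j - 1 + 1 = j := by omega
              simp only [he2] at hprev
              have h2 : s(z, p[j-1]'(by omega)) ∈ FC := by
                rw [← hje, Sym2.eq_swap]
                exact hprev.1
              have : u = p[j-1]'(by omega) := matching_unique hFm hzu h2
              exact hup (this ▸ List.getElem_mem _)
        · rw [List.mem_singleton] at hmem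
          exact huz hmem.symm
      -- extend by z
      have hp2 : AltPath (N \ FC) (FC \ N) ((p ++ [u]) ++ [z]) := by
        refine altPath_snoc hp1 hzp ?_
        have hlen1 : (p ++ [u]).length = n + 1 := by simp [hn]
        rw [if_neg (by rcases hlen with ⟨m, hm⟩; omega)]
        have : (p ++ [u])[(p ++ [u]).length - 1]'(by simp) = u := by
          simp
        rw [this]
        exact ⟨hz, hzN⟩
      have hlen2 : ((p ++ [u]) ++ [z]).length = n + 2 := by simp [hn]
      have hcard2 : ((p ++ [u]) ++ [z]).length ≤ Fintype.card V :=
        List.Nodup.length_le_card hp2.2.1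
      have hk2 : 2 ≤ k := by omega
      have hres := IH (k - 2) (by omega) ((p ++ [u]) ++ [z]) hp2
        (by
          rw [head_snoc _ z (by simp), head_snoc p u hp.1]
          exact hhead)
        (by rw [hlen2]; rcases hlen with ⟨m, hm⟩; exact ⟨m + 1, by omega⟩)
        (by
          intro x hx
          rcases List.mem_append.1 hx with hx | hx
          · rcases List.mem_append.1 hx with hx | hx
            · exact hpC x hx
            · rw [List.mem_singleton] at hx
              exact hx ▸ huC
          · rw [List.mem_singleton] at hx
            exact hx ▸ hFCin _ hz z (Sym2.mem_mk_right _ _))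
        (by omega)
      rcases hres with hres | hres
      · exact ⟨(p ++ [u]) ++ [z], hp2, by
          rw [head_snoc _ z (by simp), head_snoc p u hp.1]; exact hhead, hres, by
          rw [hlen2]; rcases hlen with ⟨m, hm⟩; exact ⟨m + 1, by omega⟩, by
          intro x hx
          rcases List.mem_append.1 hx with hx | hx
          · rcases List.mem_append.1 hx with hx | hx
            · exact hpC x hx
            · rw [List.mem_singleton] at hx
              exact hx ▸ huC
          · rw [List.mem_singleton] at hx
            exact hx ▸ hFCin _ hz z (Sym2.mem_mk_right _ _)⟩
      · exact hres

lemma walk_exists (hFm : IsMatching FC) (hNm : IsMatching N)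
    (hFCin : ∀ e ∈ FC, ∀ u ∈ e, u ∈ C) (hNin : ∀ e ∈ N, ∀ u ∈ e, u ∈ C)
    (hNcov : ∀ u ∈ C, u ≠ v → covered N u)
    (hFCr : ¬ covered FC r) (hFCcov : ∀ u ∈ C, u ≠ r → covered FC u)
    (hrC : r ∈ C) :
    ∃ q, ∃ hq : AltPath (N \ FC) (FC \ N) q, q.head hq.1 = r ∧ q.getLast hq.1 = v ∧
      Odd q.length ∧ ∀ u ∈ q, u ∈ C := by
  have h := walk_aux hFm hNm hFCin hNin hNcov hFCr hFCcov (Fintype.card V)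
    [r] (altPath_singleton r) rfl (by simp) (by simpa using hrC) (by simp)
  rcases h with h | h
  · exact ⟨[r], altPath_singleton r, rfl, h, by simp, by simpa using hrC⟩
  · exact h

end Walk
section Concat

variable {K F : Set (Sym2 V)}

lemma altPath_concat {p q : List V} (hp : AltPath K F p) (hq : AltPath K F q)
    (hOdd : Odd p.length) (hjoin : p.getLast hp.1 = q.head hq.1)
    (hdisj : ∀ x, x ∈ p → x ∈ q → x = q.head hq.1) :
    ∃ L, ∃ hL : AltPath K F L, L.head hL.1 = p.head hp.1 ∧
      L.getLast hL.1 = q.getLast hq.1 ∧ L.length = p.length + q.length - 1 := by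
  have hq0 : 0 < q.length := List.length_pos_iff.2 hq.1
  have hp0 : 0 < p.length := List.length_pos_iff.2 hp.1
  set L := p ++ q.tail with hL
  have hLlen : L.length = p.length + q.length - 1 := by
    rw [hL, List.length_append, List.length_tail]
    omega
  have htail : ∀ t (ht : t < q.tail.length), q.tail[t] = q[t+1]'(by
      rw [List.length_tail] at ht; omega) := by
    intro t ht
    rw [List.getElem_tail]
  have hqcons : q.head hq.1 ∉ q.tail := by
    cases q with
    | nil => exact absurd rfl hq.1
    | cons a l =>
      simpa using (List.nodup_cons.1 hq.2.1).1
  have hLnd : L.Nodup := by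
    rw [hL, List.nodup_append]
    refine ⟨hp.2.1, hq.2.1.sublist (List.tail_sublist q), ?_⟩
    intro x hxp y hxq hxy
    subst hxy
    have : x = q.head hq.1 := hdisj x hxp (List.mem_of_mem_tail hxq)
    exact hqcons (this ▸ hxq)
  have hLne : L ≠ [] := by
    rw [hL]
    intro h
    exact hp.1 (List.append_eq_nil_iff.1 h).1
  have hgetp : ∀ i (h : i < p.length), L[i]'(by rw [hLlen]; omega) = p[i] := by
    intro i h
    exact List.getElem_append_left h
  have hgetq : ∀ i (h : p.length ≤ i) (h2 : i < p.length + q.length - 1),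
      L[i]'(by rw [hLlen]; omega) = q[i - p.length + 1]'(by omega) := by
    intro i h h2
    have h3 : (p ++ q.tail)[i]'(by rw [List.length_append, List.length_tail]; omega) =
        q.tail[i - p.length]'(by rw [List.length_tail]; omega) :=
      List.getElem_append_right h
    exact h3.trans (htail _ (by rw [List.length_tail]; omega))
  have hjoin' : p.getLast hp.1 = q[0]'hq0 := by
    rw [hjoin, head_eq_get]
  have hLalt : AltPath K F L := by
    refine ⟨hLne, hLnd, ?_⟩
    intro i hi
    rw [hLlen] at hi
    by_cases hip : i + 1 < p.length
    · rw [hgetp i (by omega), hgetp (i+1) hip]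
      exact hp.2.2 i hip
    · by_cases hip2 : i + 1 = p.length
      · -- boundary edge = q's edge 0
        have h1 : L[i]'(by rw [hLlen]; omega) = p[i]'(by omega) := hgetp i (by omega)
        have h2 : L[i+1]'(by rw [hLlen]; omega) = q[1]'(by omega) := by
          rw [hgetq (i+1) (by omega) (by omega)]
          congr 1
          omega
        rw [h1, h2]
        have hpar : i % 2 = 0 := by rcases hOdd with ⟨m, hm⟩; omega
        rw [if_pos hpar]
        have hedge := hq.2.2 0 (by omega)
        rw [if_pos (by omega)] at hedge
        have hpi : p[i]'(by omega) = q[0]'hq0 := by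
          rw [← hjoin', getLast_eq_get]
          exact getElem_idx_congr p (by omega) (by omega)
        rw [hpi]
        exact hedge
      · -- interior q edge
        have hle : p.length ≤ i := by omega
        set t := i - p.length + 1 with ht
        have h1 : L[i]'(by rw [hLlen]; omega) = q[t]'(by omega) := hgetq i hle (by omega)
        have h2 : L[i+1]'(by rw [hLlen]; omega) = q[t+1]'(by omega) := by
          rw [hgetq (i+1) (by omega) (by omega)]
          congr 1
          omega
        rw [h1, h2]
        have hedge := hq.2.2 t (by omega)
        have hpar : t % 2 = i % 2 := by rcases hOdd with ⟨m, hm⟩; omega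
        rw [hpar] at hedge
        exact hedge
  refine ⟨L, hLalt, ?_, ?_, hLlen⟩
  · rw [head_eq_get, head_eq_get, hgetp 0 hp0]
  · rw [getLast_eq_get, getLast_eq_get]
    by_cases hq1 : q.length = 1
    · have : L.length - 1 = p.length - 1 := by rw [hLlen]; omega
      rw [getElem_idx_congr L this, hgetp (p.length - 1) (by omega)]
      have : q.length - 1 = 0 := by omega
      rw [getElem_idx_congr q this]
      rw [← hjoin', getLast_eq_get]
    · have h2 : L.length - 1 = p.length + q.length - 2 := by rw [hLlen]; omega
      rw [getElem_idx_congr L h2, hgetq _ (by omega) (by omega)]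
      congr 1
      omega

end Concat
section Reach

variable [Fintype V] {E F : Set (Sym2 V)} {Q R S : Set V}

lemma exposed_mem_ER (hE : ∀ e ∈ E, ¬ e.IsDiag) (hF : IsMaxMatching E F)
    (hGE : IsGE E F Q R S) {c : V} (hc : c ∈ R) (hcER : c ∈ ERset (E \ F) F) :
    ∃ r, r ∈ comp (avoid E S) c ∧ ¬ covered (edgesIn F (comp (avoid E S) c)) r ∧
      r ∈ ERset (E \ F) F := by
  obtain ⟨a, ha, P, hPne, hPalt, hPhead, hPlast, hPodd⟩ := hcER
  have ha' : ¬ covered F (P.head hPalt.1) := by rwa [hPhead]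
  set n := P.length with hn
  have hn0 : 0 < n := List.length_pos_iff.2 hPne
  have hclast : P[n-1]'(by omega) = c := by rw [← getLast_eq_get hPalt.1]; exact hPlast
  have hinv := path_invariant hE hF hGE hPalt ha' (n-1) (by omega)
  obtain ⟨j, hjle, hj, hjmem, hjexp⟩ := hinv.2 (by rw [hclast]; exact hc)
  rw [hclast] at hjmem hjexp
  have hjR : P[j] ∈ R := comp_subset_R hGE hc hjmem
  have hjpar : j % 2 = 0 := by
    by_contra hpar
    have hj1 : j % 2 = 1 := by omega
    rcases (path_invariant hE hF hGE hPalt ha' j hj).1 hj1 with hS | ⟨_, hcov⟩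
    · exact (hGE.2.2.2.1).le_bot ⟨hjR, hS⟩
    · rw [comp_eq_of_mem hjmem] at hcov
      exact hjexp hcov
  exact ⟨P[j], hjmem, hjexp, mem_ER_idx hPalt ha' hj hjpar⟩

lemma comp_reach (hE : ∀ e ∈ E, ¬ e.IsDiag) (hF : IsMaxMatching E F)
    (hGE : IsGE E F Q R S) {c : V} (hc : c ∈ R) {r : V}
    (hr : r ∈ comp (avoid E S) c)
    (hrexp : ¬ covered (edgesIn F (comp (avoid E S) c)) r)
    (hrER : r ∈ ERset (E \ F) F) :
    (∀ u ∈ comp (avoid E S) c, u ∈ ERset (E \ F) F) ∧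
    (∀ u ∈ comp (avoid E S) c, covered (edgesIn F (comp (avoid E S) c)) u →
      u ∈ ORset (E \ F) F) := by
  classical
  obtain ⟨a, ha, P, hPne, hPalt, hPhead, hPlast, hPodd⟩ := hrER
  have ha' : ¬ covered F (P.head hPalt.1) := by rwa [hPhead]
  set C := comp (avoid E S) c with hC
  set nP := P.length with hnP
  have hnP0 : 0 < nP := List.length_pos_iff.2 hPne
  have hPdisj : ∀ x, x ∈ P → x ∈ C → x = r := by
    intro x hxP hxC
    obtain ⟨j, hj, hje⟩ := List.mem_iff_getElem.1 hxP
    subst hje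
    by_cases hjl : j = nP - 1
    · rw [← hPlast, getLast_eq_get]
      exact getElem_idx_congr P (by omega) (by omega)
    · exfalso
      have hxR : P[j] ∈ R := comp_subset_R hGE hc hxC
      obtain ⟨j', hj'le, hj', hj'mem, hj'exp⟩ :=
        (path_invariant hE hF hGE hPalt ha' j hj).2 hxR
      rw [comp_eq_of_mem hxC] at hj'mem hj'exp
      have : P[j']'hj' = r := exposed_eq hGE hc ⟨hj'mem, hj'exp⟩ ⟨hr, hrexp⟩
      have hlast : P[nP - 1]'(by omega) = r := by
        rw [← hPlast, getLast_eq_get]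
      have : j' = nP - 1 := (List.Nodup.getElem_inj_iff hPalt.2.1).1 (this.trans hlast.symm)
      omega
  set FC := edgesIn F C with hFC
  have hFCm : IsMatching FC := matching_subset hF.2.1 (fun e he => he.1)
  have hFCin : ∀ e ∈ FC, ∀ u ∈ e, u ∈ C := fun e he => he.2
  have hFCcov : ∀ u ∈ C, u ≠ r → covered FC u := by
    intro u hu hur
    by_contra hcov
    exact hur (exposed_eq hGE hc ⟨hu, hcov⟩ ⟨hr, hrexp⟩)
  have key : ∀ t ∈ C, ∃ L, ∃ hL : AltPath (E \ F) F L, L.head hL.1 = a ∧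
      L.getLast hL.1 = t ∧ Odd L.length ∧ (t ≠ r → 3 ≤ L.length) := by
    intro t htC
    obtain ⟨N, hNsub, hNm, hNt, hNcov⟩ := (hGE.2.2.2.2.2.1 c hc).2.1 t htC
    have hNin : ∀ e ∈ N, ∀ u ∈ e, u ∈ C := fun e he => (hNsub he).2
    obtain ⟨q, hq, hqhead, hqlast, hqodd, hqC⟩ :=
      walk_exists (v := t) (r := r) hFCm hNm hFCin hNin
        (fun u hu hut => hNcov u hu hut) hrexp hFCcov hr
    have hqalt : AltPath (E \ F) F q := by
      refine altPath_mono ?_ ?_ hq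
      · rintro e ⟨heN, heFC⟩
        refine ⟨(hNsub heN).1, ?_⟩
        intro heF
        exact heFC ⟨heF, (hNsub heN).2⟩
      · rintro e ⟨heFC, _⟩
        exact heFC.1
    obtain ⟨L, hL, hLhead, hLlast, hLlen⟩ := altPath_concat hPalt hqalt hPodd
      (by rw [hPlast, hqhead])
      (by
        intro x hxP hxq
        rw [hqhead]
        exact hPdisj x hxP (hqC x hxq))
    refine ⟨L, hL, by rw [hLhead, hPhead], by rw [hLlast, hqlast], ?_, ?_⟩
    · rw [hLlen]
      rcases hPodd with ⟨mp, hmp⟩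
      rcases hqodd with ⟨mq, hmq⟩
      exact ⟨mp + mq, by omega⟩
    · intro htr
      have hq1 : q.length ≠ 1 := by
        intro h1
        apply htr
        rw [← hqlast, ← hqhead, getLast_eq_get, head_eq_get]
        exact getElem_idx_congr q (by omega) (by omega)
      rcases hqodd with ⟨mq, hmq⟩
      omega
  constructor
  · intro u huC
    obtain ⟨L, hL, hLhead, hLlast, hLodd, _⟩ := key u huC
    exact ⟨a, ha, L, hL.1, hL, hLhead, hLlast, hLodd⟩
  · intro u huC hucov
    obtain ⟨w, hwC, hw⟩ := partner_in_comp hucov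
    have hwcov : covered FC w := by
      refine ⟨s(u, w), ⟨hw, sym2_forall.2 ⟨huC, hwC⟩⟩, Sym2.mem_mk_right _ _⟩
    have hwr : w ≠ r := by
      intro h
      exact hrexp (h ▸ hwcov)
    obtain ⟨L, hL, hLhead, hLlast, hLodd, hLlen3⟩ := key w hwC
    have h3 : 3 ≤ L.length := hLlen3 hwr
    set nL := L.length with hnL
    have hlastw : L[nL - 1]'(by omega) = w := by
      rw [← hLlast, getLast_eq_get]
    have hedge := hL.2.2 (nL - 2) (by omega)
    rw [if_neg (by rcases hLodd with ⟨m, hm⟩; omega)] at hedge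
    have he2 : nL - 2 + 1 = nL - 1 := by omega
    simp only [he2] at hedge
    rw [hlastw] at hedge
    have hsecond : L[nL - 2]'(by omega) = u := by
      have h1 : s(w, L[nL - 2]'(by omega)) ∈ F := by rwa [Sym2.eq_swap] at hedge
      have h2 : s(w, u) ∈ F := by rwa [Sym2.eq_swap] at hw
      exact matching_unique hF.2.1 h1 h2
    have hLtake : AltPath (E \ F) F (L.take (nL - 1)) := altPath_take hL (by omega)
    refine ⟨a, ha, L.take (nL - 1), hLtake.1, hLtake, ?_, ?_, ?_⟩
    · rw [head_take hL.1 (by omega)]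
      exact hLhead
    · rw [getLast_eq_get]
      have hlen' : (L.take (nL - 1)).length = nL - 1 := by
        rw [List.length_take]; omega
      rw [getElem_idx_congr _ (by rw [hlen']) (by omega)]
      rw [← hsecond]
      exact List.getElem_take
    · rw [List.length_take]
      rcases hLodd with ⟨m, hm⟩
      have : min (nL - 1) nL = nL - 1 := by omega
      rw [this]
      exact ⟨m, by omega⟩
  
end Reach
lemma edgesIn_mono {F : Set (Sym2 V)} {C C' : Set V} (h : C ⊆ C') :
    edgesIn F C ⊆ edgesIn F C' := fun e he => ⟨he.1, fun u hu => h (he.2 u hu)⟩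

section Final

variable [Fintype V] {E F : Set (Sym2 V)} {Q R S : Set V}

/-- If `t ∈ ER` and `s(s,t) ∈ F` then `s ∈ OR`. -/
lemma OR_of_partner_ER (hFm : IsMatching F) {s t : V}
    (htER : t ∈ ERset (E \ F) F) (hcov : s(s, t) ∈ F) : s ∈ ORset (E \ F) F := by
  obtain ⟨a, ha, p, hpne, hpalt, hphead, hplast, hpodd⟩ := htER
  have ha' : ¬ covered F (p.head hpalt.1) := by rwa [hphead]
  set n := p.length with hn
  have hn0 : 0 < n := List.length_pos_iff.2 hpne
  by_cases hn1 : n = 1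
  · exfalso
    apply ha
    rw [← hphead]
    have : p.head hpne = t := by
      rw [← hplast, head_eq_get, getLast_eq_get]
      exact getElem_idx_congr p (by omega) (by omega)
    rw [this]
    exact covered_iff.2 ⟨s, by rwa [Sym2.eq_swap] at hcov⟩
  · have h3 : 3 ≤ n := by rcases hpodd with ⟨m, hm⟩; omega
    have hedge := hpalt.2.2 (n-2) (by omega)
    rw [if_neg (by rcases hpodd with ⟨m, hm⟩; omega)] at hedge
    have he2 : n - 2 + 1 = n - 1 := by omega
    simp only [he2] at hedge
    have hlt : p[n-1]'(by omega) = t := by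
      rw [← hplast, getLast_eq_get]
    rw [hlt] at hedge
    have h1 : s(t, p[n-2]'(by omega)) ∈ F := by rwa [Sym2.eq_swap] at hedge
    have h2 : s(t, s) ∈ F := by rwa [Sym2.eq_swap] at hcov
    have : p[n-2]'(by omega) = s := matching_unique hFm h1 h2
    rw [← this]
    exact mem_OR_idx hpalt ha' (by omega) (by rcases hpodd with ⟨m, hm⟩; omega)

/-- If `a ∈ ER`, `b ∈ S` and `s(a,b)` is a non-matching edge then `b ∈ OR`. -/
lemma OR_of_K_edge (hE : ∀ e ∈ E, ¬ e.IsDiag) (hF : IsMaxMatching E F)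
    (hGE : IsGE E F Q R S) {a b : V} (haER : a ∈ ERset (E \ F) F) (hbS : b ∈ S)
    (he : s(a, b) ∈ E \ F) : b ∈ ORset (E \ F) F := by
  obtain ⟨a₀, ha₀, p, hpne, hpalt, hphead, hplast, hpodd⟩ := haER
  have ha' : ¬ covered F (p.head hpalt.1) := by rwa [hphead]
  by_cases hbp : b ∈ p
  · obtain ⟨j, hj, hje⟩ := List.mem_iff_getElem.1 hbp
    by_cases hjpar : j % 2 = 1
    · rw [← hje]
      exact mem_OR_idx hpalt ha' hj hjpar
    · exfalso
      have : p[j] ∈ ERset (E \ F) F := mem_ER_idx hpalt ha' hj (by omega)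
      have : p[j] ∈ R := ER_subset_R hE hF hGE this
      exact (hGE.2.2.2.1).le_bot ⟨this, hje ▸ hbS⟩
  · exact OR_extend hpalt ha' hpodd hbp (by rw [hplast]; exact he)

/-- The matched partner `t` (exposed in its component) is not on a witness path ending at `s`. -/
lemma partner_not_on_path (hE : ∀ e ∈ E, ¬ e.IsDiag) (hF : IsMaxMatching E F)
    (hGE : IsGE E F Q R S) {p : List V} (hp : AltPath (E \ F) F p)
    (ha : ¬ covered F (p.head hp.1)) (hlen : Even p.length) {t : V}
    (ht : s(p.getLast hp.1, t) ∈ F) (htR : t ∈ R)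
    (htexp : ¬ covered (edgesIn F (comp (avoid E S) t)) t) : t ∉ p := by
  intro htp
  set n := p.length with hn
  have hn0 : 0 < n := List.length_pos_iff.2 hp.1
  obtain ⟨j, hj, hje⟩ := List.mem_iff_getElem.1 htp
  by_cases hjpar : j % 2 = 1
  · rcases (path_invariant hE hF hGE hp ha j hj).1 hjpar with hS | ⟨_, hcov⟩
    · exact (hGE.2.2.2.1).le_bot ⟨htR, hje ▸ hS⟩
    · rw [hje] at hcov
      exact htexp hcov
  · by_cases hj0 : j = 0
    · subst hj0
      apply ha
      rw [head_eq_get, hje]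
      exact covered_iff.2 ⟨p.getLast hp.1, by rwa [Sym2.eq_swap] at ht⟩
    · have hedge := hp.2.2 (j-1) (by omega)
      rw [if_neg (by omega)] at hedge
      have he2 : j - 1 + 1 = j := by omega
      simp only [he2] at hedge
      rw [hje] at hedge
      have h1 : s(t, p[j-1]'(by omega)) ∈ F := by rwa [Sym2.eq_swap] at hedge
      have h2 : s(t, p.getLast hp.1) ∈ F := by rwa [Sym2.eq_swap] at ht
      have heq : p[j-1]'(by omega) = p.getLast hp.1 := matching_unique hF.2.1 h1 h2
      rw [getLast_eq_get] at heq
      have : j - 1 = n - 1 := (List.Nodup.getElem_inj_iff hp.2.1).1 heq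
      omega

/-- If `s ∈ OR`, `s(s,t) ∈ F` with `t` exposed in its component, then `t ∈ ER`. -/
lemma ER_of_partner_OR (hE : ∀ e ∈ E, ¬ e.IsDiag) (hF : IsMaxMatching E F)
    (hGE : IsGE E F Q R S) {s t : V} (hsOR : s ∈ ORset (E \ F) F)
    (hedge : s(s, t) ∈ F) (htR : t ∈ R)
    (htexp : ¬ covered (edgesIn F (comp (avoid E S) t)) t) : t ∈ ERset (E \ F) F := by
  obtain ⟨a, ha, p, hpne, hpalt, hphead, hplast, hpeven⟩ := hsOR
  have ha' : ¬ covered F (p.head hpalt.1) := by rwa [hphead]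
  have htp : t ∉ p := partner_not_on_path hE hF hGE hpalt ha' hpeven
    (by rw [hplast]; exact hedge) htR htexp
  exact ER_extend hpalt ha' hpeven htp (by rw [hplast]; exact hedge)

end Final

section Final2

variable [Fintype V] {E F : Set (Sym2 V)} {Q R S : Set V}

lemma comp_ER_all (hE : ∀ e ∈ E, ¬ e.IsDiag) (hF : IsMaxMatching E F)
    (hGE : IsGE E F Q R S) {c : V} (hc : c ∈ R)
    (hex : ∃ u ∈ comp (avoid E S) c, u ∈ ERset (E \ F) F) :
    (∀ u ∈ comp (avoid E S) c, u ∈ ERset (E \ F) F) ∧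
    (∀ u ∈ comp (avoid E S) c, covered (edgesIn F (comp (avoid E S) c)) u →
      u ∈ ORset (E \ F) F) := by
  obtain ⟨u₀, hu₀, hu₀ER⟩ := hex
  have hu₀R : u₀ ∈ R := comp_subset_R hGE hc hu₀
  obtain ⟨r, hrmem, hrexp, hrER⟩ := exposed_mem_ER hE hF hGE hu₀R hu₀ER
  have hceq : comp (avoid E S) u₀ = comp (avoid E S) c := comp_eq_of_mem hu₀
  rw [hceq] at hrmem hrexp
  exact comp_reach hE hF hGE hc hrmem hrexp hrER

lemma OR_subset (hE : ∀ e ∈ E, ¬ e.IsDiag) (hF : IsMaxMatching E F)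
    (hGE : IsGE E F Q R S) :
    ORset (E \ F) F ⊆ S ∪ {v ∈ R | covered (edgesIn F (comp (avoid E S) v)) v} := by
  rintro x ⟨a, ha, p, hpne, hpalt, hphead, hplast, hpeven⟩
  have ha' : ¬ covered F (p.head hpalt.1) := by rwa [hphead]
  set n := p.length with hn
  have hn0 : 0 < n := List.length_pos_iff.2 hpne
  have hx : p[n-1]'(by omega) = x := by rw [← hplast, getLast_eq_get]
  have hinv := (path_invariant hE hF hGE hpalt ha' (n-1) (by omega)).1
    (by rcases hpeven with ⟨m, hm⟩; omega)
  rw [hx] at hinv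
  rcases hinv with h | ⟨h1, h2⟩
  · exact Or.inl h
  · exact Or.inr ⟨h1, h2⟩

lemma comp_SO_eq (hE : ∀ e ∈ E, ¬ e.IsDiag) (hF : IsMaxMatching E F)
    (hGE : IsGE E F Q R S) {v : V} (hvR : v ∈ R) (hvER : v ∈ ERset (E \ F) F) :
    comp (avoid E (S ∩ ORset (E \ F) F)) v = comp (avoid E S) v := by
  apply Set.Subset.antisymm
  · intro u hu
    have hall := (comp_ER_all hE hF hGE hvR ⟨v, mem_comp_self _ _, hvER⟩).1
    have hu' : Relation.ReflTransGen
        (fun a b => s(a, b) ∈ avoid E (S ∩ ORset (E \ F) F)) v u := hu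
    clear hu
    induction hu' with
    | refl => exact mem_comp_self _ _
    | @tail b c hab hbc ih =>
      have hbR : b ∈ R := comp_subset_R hGE hvR ih
      have hbER : b ∈ ERset (E \ F) F := hall b ih
      by_cases hcS : c ∈ S
      · exfalso
        have hcOR : c ∉ ORset (E \ F) F :=
          fun h => hbc.2 c (Sym2.mem_mk_right _ _) ⟨hcS, h⟩
        by_cases heF : s(b, c) ∈ F
        · exact hcOR (OR_of_partner_ER hF.2.1 hbER (by rwa [Sym2.eq_swap] at heF))
        · exact hcOR (OR_of_K_edge hE hF hGE hbER hcS ⟨hbc.1, heF⟩)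
      · refine comp_tail ih ⟨hbc.1, sym2_forall.2 ⟨?_, hcS⟩⟩
        exact fun h => (hGE.2.2.2.1).le_bot ⟨hbR, h⟩
  · intro u hu
    refine Relation.ReflTransGen.mono ?_ _ _ hu
    intro a b hab
    exact ⟨hab.1, fun x hx h2 => hab.2 x hx h2.1⟩

lemma R_S_reachable (hE : ∀ e ∈ E, ¬ e.IsDiag) (hF : IsMaxMatching E F)
    (hGE : IsGE E F Q R S)
    (hmax : ∀ Q' R' S' : Set V, IsGE E F Q' R' S' → ¬ Q ⊂ Q') :
    R ⊆ ERset (E \ F) F ∧ S ⊆ ORset (E \ F) F := by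
  classical
  set ER' := ERset (E \ F) F with hER'
  set OR' := ORset (E \ F) F with hOR'
  set Q' : Set V := Q ∪ ((R \ ER') ∪ (S \ OR')) with hQ'
  have hQsub : Q ⊆ Q' := Set.subset_union_left
  have hunreach : ∀ c ∈ R, c ∉ ER' → ∀ u ∈ comp (avoid E S) c, u ∉ ER' := by
    intro c hc hcER u hu huER
    exact hcER ((comp_ER_all hE hF hGE hc ⟨u, hu, huER⟩).1 c (mem_comp_self _ _))
  have hGE' : IsGE E F Q' (R ∩ ER') (S ∩ OR') := by
    refine ⟨?_, ?_, ?_, ?_, ?_, ?_, ?_⟩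
    · -- union is everything
      apply Set.eq_univ_of_forall
      intro x
      have hx : x ∈ Q ∪ R ∪ S := hGE.1 ▸ Set.mem_univ x
      rcases hx with (hx | hx) | hx
      · exact Or.inl (Or.inl (Or.inl hx))
      · by_cases h : x ∈ ER'
        · exact Or.inl (Or.inr ⟨hx, h⟩)
        · exact Or.inl (Or.inl (Or.inr (Or.inl ⟨hx, h⟩)))
      · by_cases h : x ∈ OR'
        · exact Or.inr ⟨hx, h⟩
        · exact Or.inl (Or.inl (Or.inr (Or.inr ⟨hx, h⟩)))
    · rw [Set.disjoint_left]
      rintro x (hx | (hx | hx)) hx'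
      · exact (hGE.2.1).le_bot ⟨hx, hx'.1⟩
      · exact hx.2 hx'.2
      · exact (hGE.2.2.2.1).le_bot ⟨hx'.1, hx.1⟩
    · rw [Set.disjoint_left]
      rintro x (hx | (hx | hx)) hx'
      · exact (hGE.2.2.1).le_bot ⟨hx, hx'.1⟩
      · exact (hGE.2.2.2.1).le_bot ⟨hx.1, hx'.1⟩
      · exact hx.2 hx'.2
    · rw [Set.disjoint_left]
      rintro x hx hx'
      exact (hGE.2.2.2.1).le_bot ⟨hx.1, hx'.1⟩
    · -- every vertex of Q' is covered within Q'
      rintro x (hx | (hx | hx))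
      · obtain ⟨e, he, hxe⟩ := hGE.2.2.2.2.1 x hx
        exact ⟨e, ⟨he.1, fun u hu => hQsub (he.2 u hu)⟩, hxe⟩
      · -- x ∈ R \ ER'
        obtain ⟨hxR, hxER⟩ := hx
        obtain ⟨r, ⟨hrmem, hrexp⟩, hruniq⟩ := (hGE.2.2.2.2.2.1 x hxR).2.2
        by_cases hxr : x = r
        · -- x is the exposed vertex of its component
          subst hxr
          have hxcovF : covered F x := by
            by_contra hxcov
            exact hxER (uncovered_mem_ER hxcov)
          obtain ⟨s', hs'⟩ := covered_iff.1 hxcovF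
          have hs'S : s' ∈ S := exposed_partner_S hF.1 hGE hxR hrexp hs'
          have hs'OR : s' ∉ OR' := by
            intro h
            exact hxER (ER_of_partner_OR hE hF hGE h
              (by rwa [Sym2.eq_swap] at hs') hxR hrexp)
          refine ⟨s(x, s'), ⟨hs', sym2_forall.2 ⟨?_, ?_⟩⟩, Sym2.mem_mk_left _ _⟩
          · exact Or.inr (Or.inl ⟨hxR, hxER⟩)
          · exact Or.inr (Or.inr ⟨hs'S, hs'OR⟩)
        · -- x is covered inside its component
          have hxcov : covered (edgesIn F (comp (avoid E S) x)) x := by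
            by_contra h
            exact hxr (hruniq x ⟨mem_comp_self _ _, h⟩)
          obtain ⟨w, hwmem, hw⟩ := partner_in_comp hxcov
          have hwR : w ∈ R := comp_subset_R hGE hxR hwmem
          have hwER : w ∉ ER' := hunreach x hxR hxER w hwmem
          refine ⟨s(x, w), ⟨hw, sym2_forall.2 ⟨?_, ?_⟩⟩, Sym2.mem_mk_left _ _⟩
          · exact Or.inr (Or.inl ⟨hxR, hxER⟩)
          · exact Or.inr (Or.inl ⟨hwR, hwER⟩)
      · -- x ∈ S \ OR'
        obtain ⟨hxS, hxOR⟩ := hx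
        obtain ⟨t, hts, htR, htexp⟩ := hGE.2.2.2.2.2.2 x hxS
        have htER : t ∉ ER' := by
          intro h
          exact hxOR (OR_of_partner_ER hF.2.1 h hts)
        refine ⟨s(x, t), ⟨hts, sym2_forall.2 ⟨?_, ?_⟩⟩, Sym2.mem_mk_left _ _⟩
        · exact Or.inr (Or.inr ⟨hxS, hxOR⟩)
        · exact Or.inr (Or.inl ⟨htR, htER⟩)
    · -- component conditions for R ∩ ER'
      rintro x ⟨hxR, hxER⟩
      have hceq := comp_SO_eq hE hF hGE hxR hxER
      rw [← hOR'] at hceq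
      rw [hceq]
      obtain ⟨hsub, hhyp, huniq⟩ := hGE.2.2.2.2.2.1 x hxR
      refine ⟨?_, hhyp, huniq⟩
      intro u hu
      exact ⟨hsub hu, (comp_ER_all hE hF hGE hxR ⟨x, mem_comp_self _ _, hxER⟩).1 u hu⟩
    · -- S ∩ OR' condition
      rintro x ⟨hxS, hxOR⟩
      obtain ⟨t, hts, htR, htexp⟩ := hGE.2.2.2.2.2.2 x hxS
      have htER : t ∈ ER' := ER_of_partner_OR hE hF hGE hxOR hts htR htexp
      have hceq := comp_SO_eq hE hF hGE htR htER
      rw [← hOR'] at hceq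
      refine ⟨t, hts, ⟨htR, htER⟩, ?_⟩
      rw [hceq]
      exact htexp
  have hnot : ¬ Q ⊂ Q' := hmax Q' (R ∩ ER') (S ∩ OR') hGE'
  have hQeq : Q' = Q := by
    by_contra h
    exact hnot ⟨hQsub, fun hsub => h (Set.Subset.antisymm (by
      intro x hx
      exact hsub hx) hQsub)⟩
  constructor
  · intro v hv
    by_contra hvER
    have : v ∈ Q' := Or.inr (Or.inl ⟨hv, hvER⟩)
    rw [hQeq] at this
    exact (hGE.2.1).le_bot ⟨this, hv⟩
  · intro s hs
    by_contra hsOR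
    have : s ∈ Q' := Or.inr (Or.inr ⟨hs, hsOR⟩)
    rw [hQeq] at this
    exact (hGE.2.2.1).le_bot ⟨this, hs⟩

end Final2



/-- if `(Q,R,S)` is a Gallai–Edmonds decomposition for the maximum matching `F`
in which `Q` is maximal under containment, then `ER(K,F) = ⋃ V(H_i) = R` and
`OR(K,F) = S ∪ ⋃ (V(H_i) \ {r_i})`, where `K = E \ F`. -/
theorem stmt_13 {V : Type*} [Fintype V] (E F : Set (Sym2 V)) (Q R S : Set V)
    (hE : ∀ e ∈ E, ¬ e.IsDiag) (hF : IsMaxMatching E F) (hGE : IsGE E F Q R S)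
    (hmax : ∀ Q' R' S' : Set V, IsGE E F Q' R' S' → ¬ Q ⊂ Q') :
    ERset (E \ F) F = R ∧
    ORset (E \ F) F = S ∪ {v ∈ R | covered (edgesIn F (comp (avoid E S) v)) v} := by
  obtain ⟨hR, hS⟩ := R_S_reachable hE hF hGE hmax
  constructor
  · exact Set.Subset.antisymm (ER_subset_R hE hF hGE) hR
  · apply Set.Subset.antisymm (OR_subset hE hF hGE)
    rintro x (hx | hx)
    · exact hS hx
    · exact (comp_ER_all hE hF hGE hx.1 ⟨x, mem_comp_self _ _, hR hx.1⟩).2 x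
        (mem_comp_self _ _) hx.2
end

section
/- For every even n ≥ 2 there exists a family of 2n−1 matchings, each of size n, in a (non-bipartite) graph with no rainbow matching of size n: take n−1 copies of each of the two perfect matchings of the cycle C_{2n}, together with one matching of size n on the vertices of C_{2n} all of whose pairs v_i v_j have j − i even. -/
variable {V : Type*}

/-- A rainbow matching of size `n` for a family `M` of edge sets: `n` edges, one from each of
`n` distinct members of the family, forming a matching. -/
def HasRainbow {V : Type*} [DecidableEq V] {m : ℕ} (n : ℕ) (M : Fin m → Finset (Sym2 V)) :
    Prop :=
  ∃ (f : Fin n → Fin m) (e : Fin n → Sym2 V),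
    Function.Injective f ∧ (∀ j, e j ∈ M (f j)) ∧ Function.Injective e ∧
    IsMatching ((Finset.image e Finset.univ : Finset (Sym2 V)) : Set (Sym2 V))

/-- The edge set of the cycle on the `n` vertices `ZMod n` (vertices in cyclic order). -/
def cycleEdges (n : ℕ) : Finset (Sym2 (ZMod n)) :=
  (Finset.range n).image fun i : ℕ => s((i : ZMod n), (i : ZMod n) + 1)


namespace Stmt19
open Finset

abbrev Z (n : ℕ) := ZMod (2*n)

def pm1 (n : ℕ) : Finset (Sym2 (Z n)) :=
  (range n).image fun i => s(((2*i : ℕ) : Z n), ((2*i+1 : ℕ) : Z n))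

def pm2 (n : ℕ) : Finset (Sym2 (Z n)) :=
  (range n).image fun i => s(((2*i+1 : ℕ) : Z n), ((2*i+2 : ℕ) : Z n))

def mev (n : ℕ) : Finset (Sym2 (Z n)) :=
  (range n).image fun i =>
    if i % 2 = 0 then s(((2*i : ℕ) : Z n), ((2*i+2 : ℕ) : Z n))
    else s(((2*i-1 : ℕ) : Z n), ((2*i+1 : ℕ) : Z n))

lemma mem_pm1 {n : ℕ} {ed : Sym2 (Z n)} :
    ed ∈ pm1 n ↔ ∃ i, i < n ∧ ed = s(((2*i : ℕ) : Z n), ((2*i+1 : ℕ) : Z n)) := by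
  simp [pm1, eq_comm]

lemma mem_pm2 {n : ℕ} {ed : Sym2 (Z n)} :
    ed ∈ pm2 n ↔ ∃ i, i < n ∧ ed = s(((2*i+1 : ℕ) : Z n), ((2*i+2 : ℕ) : Z n)) := by
  simp [pm2, eq_comm]

lemma mem_mev {n : ℕ} {ed : Sym2 (Z n)} :
    ed ∈ mev n ↔ ∃ i, i < n ∧ ed =
      (if i % 2 = 0 then s(((2*i : ℕ) : Z n), ((2*i+2 : ℕ) : Z n))
       else s(((2*i-1 : ℕ) : Z n), ((2*i+1 : ℕ) : Z n))) := by
  simp [mev, eq_comm]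

lemma ceq (n : ℕ) (a b : ℕ) : ((a : Z n) = (b : Z n)) ↔ a % (2*n) = b % (2*n) :=
  ZMod.natCast_eq_natCast_iff' a b (2*n)

lemma parcast (n : ℕ) (hn : 2 ≤ n) (a : ℕ) : ((a : Z n)).val % 2 = a % 2 := by
  haveI : NeZero (2*n) := ⟨by omega⟩
  rw [ZMod.val_natCast, Nat.mod_mod_of_dvd _ ⟨n, rfl⟩]

lemma pareq {n : ℕ} (hn : 2 ≤ n) {a b : ℕ} (h : (a : Z n) = (b : Z n)) :
    a % 2 = b % 2 := by
  rw [← parcast n hn a, ← parcast n hn b, h]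

lemma ceq1 {n : ℕ} (hn : 2 ≤ n) {a b : ℕ} (ha1 : 1 ≤ a) (ha : a ≤ 2*n) (hb1 : 1 ≤ b)
    (hb : b ≤ 2*n) : ((a : Z n) = (b : Z n)) ↔ a = b := by
  rw [ceq]
  constructor
  · intro h
    rcases Nat.lt_or_ge a (2*n) with ha' | ha'
    · rcases Nat.lt_or_ge b (2*n) with hb' | hb'
      · rwa [Nat.mod_eq_of_lt ha', Nat.mod_eq_of_lt hb'] at h
      · have hb2 : b = 2*n := le_antisymm hb hb'
        subst hb2; rw [Nat.mod_eq_of_lt ha', Nat.mod_self] at h; omega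
    · have ha2 : a = 2*n := le_antisymm ha ha'
      subst ha2
      rcases Nat.lt_or_ge b (2*n) with hb' | hb'
      · rw [Nat.mod_self, Nat.mod_eq_of_lt hb'] at h; omega
      · have : b = 2*n := le_antisymm hb hb'; omega
  · rintro rfl; rfl

lemma ceq' {n : ℕ} (hn : 2 ≤ n) {a b : ℕ} (ha : a < 2*n) (hb : b < 2*n) :
    ((a : Z n) = (b : Z n)) ↔ a = b := by
  rw [ceq]
  constructor
  · intro h; rwa [Nat.mod_eq_of_lt ha, Nat.mod_eq_of_lt hb] at h
  · rintro rfl; rfl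


lemma pm1_isMatching {n : ℕ} (hn : 2 ≤ n) : IsMatching ((pm1 n : Finset (Sym2 (Z n))) : Set (Sym2 (Z n))) := by
  constructor
  · intro e he
    rcases mem_pm1.mp (Finset.mem_coe.mp he) with ⟨i, hi, rfl⟩
    rw [Sym2.mk_isDiag_iff, ceq' hn (by omega) (by omega)]
    omega
  · intro e he f hf hef v hv hv'
    rcases mem_pm1.mp (Finset.mem_coe.mp he) with ⟨i, hi, rfl⟩
    rcases mem_pm1.mp (Finset.mem_coe.mp hf) with ⟨j, hj, rfl⟩
    rcases Sym2.mem_iff.mp hv with rfl | rfl <;>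
      rcases Sym2.mem_iff.mp hv' with h | h <;>
      [ (exact hef (by rw [(ceq' hn (by omega) (by omega)).mp h] ));
        (exact absurd (pareq hn h) (by omega));
        (exact absurd (pareq hn h) (by omega));
        (exact hef (by rw [show i = j by have := (ceq' hn (by omega) (by omega)).mp h; omega])) ]

lemma pm1_card {n : ℕ} (hn : 2 ≤ n) : (pm1 n).card = n := by
  rw [pm1, Finset.card_image_of_injOn, card_range]
  intro i hi j hj hij
  simp only [mem_coe, mem_range] at hi hj
  rw [Sym2.eq_iff] at hij
  rcases hij with ⟨h1, _⟩ | ⟨h1, _⟩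
  · have := (ceq' hn (by omega) (by omega)).mp h1; omega
  · have := pareq hn h1; omega

lemma pm2_isMatching {n : ℕ} (hn : 2 ≤ n) : IsMatching ((pm2 n : Finset (Sym2 (Z n))) : Set (Sym2 (Z n))) := by
  constructor
  · intro e he
    rcases mem_pm2.mp (Finset.mem_coe.mp he) with ⟨i, hi, rfl⟩
    rw [Sym2.mk_isDiag_iff]
    intro h
    have := pareq hn h; omega
  · intro e he f hf hef v hv hv'
    rcases mem_pm2.mp (Finset.mem_coe.mp he) with ⟨i, hi, rfl⟩
    rcases mem_pm2.mp (Finset.mem_coe.mp hf) with ⟨j, hj, rfl⟩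
    rcases Sym2.mem_iff.mp hv with rfl | rfl <;>
      rcases Sym2.mem_iff.mp hv' with h | h
    · exact hef (by rw [show i = j by
        have := (ceq' hn (by omega) (by omega)).mp h; omega])
    · exact absurd (pareq hn h) (by omega)
    · exact absurd (pareq hn h) (by omega)
    · exact hef (by rw [show i = j by
        have := (ceq1 hn (by omega) (by omega) (by omega) (by omega)).mp h; omega])

lemma pm2_card {n : ℕ} (hn : 2 ≤ n) : (pm2 n).card = n := by
  rw [pm2, Finset.card_image_of_injOn, card_range]
  intro i hi j hj hij
  simp only [mem_coe, mem_range] at hi hj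
  rw [Sym2.eq_iff] at hij
  rcases hij with ⟨h1, _⟩ | ⟨h1, _⟩
  · have := (ceq' hn (by omega) (by omega)).mp h1; omega
  · have := pareq hn h1; omega

lemma mev_isMatching {n : ℕ} (hn : 2 ≤ n) (hev : Even n) :
    IsMatching ((mev n : Finset (Sym2 (Z n))) : Set (Sym2 (Z n))) := by
  obtain ⟨m, hm⟩ := hev
  constructor
  · intro e he
    rcases mem_mev.mp (Finset.mem_coe.mp he) with ⟨i, hi, rfl⟩
    split_ifs with hpar <;> rw [Sym2.mk_isDiag_iff] <;> intro h
    · have := (ceq' hn (by omega) (by omega)).mp h; omega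
    · have := (ceq' hn (by omega) (by omega)).mp h; omega
  · intro e he f hf hef v hv hv'
    rcases mem_mev.mp (Finset.mem_coe.mp he) with ⟨i, hi, rfl⟩
    rcases mem_mev.mp (Finset.mem_coe.mp hf) with ⟨j, hj, rfl⟩
    split_ifs at hv hv' hef with h1 h2
    · rcases Sym2.mem_iff.mp hv with rfl | rfl <;>
        rcases Sym2.mem_iff.mp hv' with h | h <;>
        exact hef (by rw [show i = j by
          have := (ceq' hn (by omega) (by omega)).mp h; omega])
    · rcases Sym2.mem_iff.mp hv with rfl | rfl <;>
        rcases Sym2.mem_iff.mp hv' with h | h <;>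
        exact absurd ((ceq' hn (by omega) (by omega)).mp h) (by omega)
    · rcases Sym2.mem_iff.mp hv with rfl | rfl <;>
        rcases Sym2.mem_iff.mp hv' with h | h <;>
        exact absurd ((ceq' hn (by omega) (by omega)).mp h) (by omega)
    · rcases Sym2.mem_iff.mp hv with rfl | rfl <;>
        rcases Sym2.mem_iff.mp hv' with h | h <;>
        exact hef (by rw [show i = j by
          have := (ceq' hn (by omega) (by omega)).mp h; omega])

lemma mev_card {n : ℕ} (hn : 2 ≤ n) (hev : Even n) : (mev n).card = n := by
  obtain ⟨m, hm⟩ := hev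
  rw [mev, Finset.card_image_of_injOn, card_range]
  intro i hi j hj hij
  simp only [mem_coe, mem_range] at hi hj
  simp only at hij
  split_ifs at hij with h1 h2 h2 <;> rw [Sym2.eq_iff] at hij <;>
    rcases hij with ⟨ha, hb⟩ | ⟨ha, hb⟩ <;>
    first
    | (have := (ceq' hn (by omega) (by omega)).mp ha; omega)
    | (have h1 := (ceq' hn (by omega) (by omega)).mp ha;
       have h2 := (ceq' hn (by omega) (by omega)).mp hb; omega)


lemma pm12_disj {n : ℕ} (hn : 2 ≤ n) : ∀ ed ∈ pm1 n, ed ∉ pm2 n := by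
  intro ed h1 h2
  rcases mem_pm1.mp h1 with ⟨i, hi, rfl⟩
  rcases mem_pm2.mp h2 with ⟨j, hj, hij⟩
  rw [Sym2.eq_iff] at hij
  rcases hij with ⟨ha, hb⟩ | ⟨ha, hb⟩
  · exact absurd (pareq hn ha) (by omega)
  · have h1 := (ceq' hn (by omega) (by omega)).mp hb
    have hij : i = j := by omega
    subst hij
    rcases Nat.eq_zero_or_pos i with rfl | hpos
    · have := (ceq' hn (by omega) (by omega)).mp ha; omega
    · have := (ceq1 hn (by omega) (by omega) (by omega) (by omega)).mp ha; omega

lemma mev_pair_parity {n : ℕ} (hn : 2 ≤ n) (hev : Even n) {ed : Sym2 (Z n)} (h : ed ∈ mev n) :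
    ∃ a b : Z n, ed = s(a, b) ∧ a ≠ b ∧ a.val % 2 = b.val % 2 := by
  obtain ⟨m, hm⟩ := hev
  rcases mem_mev.mp h with ⟨i, hi, rfl⟩
  split_ifs with hpar
  · refine ⟨_, _, rfl, ?_, ?_⟩
    · intro h'; have := (ceq' hn (by omega) (by omega)).mp h'; omega
    · rw [parcast n hn, parcast n hn]; omega
  · refine ⟨_, _, rfl, ?_, ?_⟩
    · intro h'; have := (ceq' hn (by omega) (by omega)).mp h'; omega
    · rw [parcast n hn, parcast n hn]; omega

lemma cyc_pair_parity {n : ℕ} (hn : 2 ≤ n) {ed : Sym2 (Z n)}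
    (h : ed ∈ pm1 n ∨ ed ∈ pm2 n) :
    ∃ a b : Z n, ed = s(a, b) ∧ a.val % 2 = 0 ∧ b.val % 2 = 1 := by
  rcases h with h | h
  · rcases mem_pm1.mp h with ⟨i, hi, rfl⟩
    exact ⟨_, _, rfl, by rw [parcast n hn]; omega, by rw [parcast n hn]; omega⟩
  · rcases mem_pm2.mp h with ⟨i, hi, rfl⟩
    exact ⟨_, _, Sym2.eq_swap.symm, by rw [parcast n hn]; omega, by rw [parcast n hn]; omega⟩

lemma cyc_mev_disj {n : ℕ} (hn : 2 ≤ n) (hev : Even n) {ed : Sym2 (Z n)}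
    (h : ed ∈ pm1 n ∨ ed ∈ pm2 n) : ed ∉ mev n := by
  intro hm
  rcases cyc_pair_parity hn h with ⟨a, b, rfl, hpa, hpb⟩
  rcases mev_pair_parity hn hev hm with ⟨c, d, hcd, hne, hpar⟩
  rw [Sym2.eq_iff] at hcd
  rcases hcd with ⟨rfl, rfl⟩ | ⟨rfl, rfl⟩ <;> omega


lemma pm1_subset_cycle {n : ℕ} (hn : 2 ≤ n) : pm1 n ⊆ cycleEdges (2*n) := by
  intro ed hed
  rcases mem_pm1.mp hed with ⟨i, hi, rfl⟩
  rw [cycleEdges, Finset.mem_image]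
  exact ⟨2*i, Finset.mem_range.mpr (by omega), by push_cast; ring_nf⟩

lemma pm2_subset_cycle {n : ℕ} (hn : 2 ≤ n) : pm2 n ⊆ cycleEdges (2*n) := by
  intro ed hed
  rcases mem_pm2.mp hed with ⟨i, hi, rfl⟩
  rw [cycleEdges, Finset.mem_image]
  exact ⟨2*i+1, Finset.mem_range.mpr (by omega), by push_cast; ring_nf⟩

lemma mev_chords {n : ℕ} (hn : 2 ≤ n) (hev : Even n) :
    ∀ e ∈ mev n, ∃ a b : ℕ, a < b ∧ b < 2 * n ∧ Even (b - a) ∧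
      e = s((a : Z n), (b : Z n)) := by
  obtain ⟨m, hm⟩ := hev
  intro e he
  rcases mem_mev.mp he with ⟨i, hi, rfl⟩
  split_ifs with hpar
  · exact ⟨2*i, 2*i+2, by omega, by omega, ⟨1, by omega⟩, rfl⟩
  · exact ⟨2*i-1, 2*i+1, by omega, by omega, ⟨1, by omega⟩, rfl⟩

def fam (n : ℕ) : Fin (2*n-1) → Finset (Sym2 (Z n)) := fun i =>
  if (i : ℕ) < n - 1 then pm1 n else if (i : ℕ) < 2*n - 2 then pm2 n else mev n

def edF (n : ℕ) : Sym2 (Z n) → Finset (Z n) :=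
  Sym2.lift ⟨fun a b => {a, b}, fun a b => Finset.pair_comm a b⟩

lemma edF_mk {n : ℕ} (a b : Z n) : edF n s(a, b) = {a, b} := rfl

lemma mem_edF {n : ℕ} {v : Z n} {ed : Sym2 (Z n)} : v ∈ edF n ed ↔ v ∈ ed := by
  induction ed using Sym2.ind with
  | _ a b => rw [edF_mk, Sym2.mem_iff, Finset.mem_insert, Finset.mem_singleton]

lemma card_edF {n : ℕ} {ed : Sym2 (Z n)} (h : ¬ ed.IsDiag) : (edF n ed).card = 2 := by
  induction ed using Sym2.ind with
  | _ a b =>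
    rw [Sym2.mk_isDiag_iff] at h
    rw [edF_mk, Finset.card_insert_of_notMem (by simpa using h), Finset.card_singleton]

def evens (n : ℕ) [NeZero (2*n)] : Finset (Z n) := univ.filter (fun v => v.val % 2 = 0)

lemma mem_evens {n : ℕ} [NeZero (2*n)] {v : Z n} : v ∈ evens n ↔ v.val % 2 = 0 := by
  simp [evens]

lemma evens_card {n : ℕ} [NeZero (2*n)] (hn : 2 ≤ n) : (evens n).card = n := by
  have himg : evens n = (range n).image (fun i => ((2*i : ℕ) : Z n)) := by
    ext v
    rw [mem_evens]
    simp only [mem_image, mem_range]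
    constructor
    · intro hv
      refine ⟨v.val / 2, ?_, ?_⟩
      · have := ZMod.val_lt v; omega
      · have h2 : 2 * (v.val / 2) = v.val := by omega
        rw [h2]
        exact ZMod.natCast_rightInverse v
    · rintro ⟨i, hi, rfl⟩
      rw [ZMod.val_natCast, Nat.mod_eq_of_lt (show 2*i < 2*n by omega)]
      omega
  rw [himg, Finset.card_image_of_injOn, card_range]
  intro i hi j hj hij
  simp only [mem_coe, mem_range] at hi hj
  have := (ceq' hn (by omega) (by omega)).mp hij
  omega

lemma inter_card_cyc {n : ℕ} [NeZero (2*n)] (hn : 2 ≤ n) {a b : Z n} (hab : a ≠ b)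
    (ha : a.val % 2 = 0) (hb : b.val % 2 = 1) : ({a, b} ∩ evens n).card = 1 := by
  have : ({a, b} : Finset (Z n)) ∩ evens n = {a} := by
    ext v
    simp only [Finset.mem_inter, Finset.mem_insert, Finset.mem_singleton, mem_evens]
    constructor
    · rintro ⟨rfl | rfl, hv⟩
      · rfl
      · omega
    · rintro rfl; exact ⟨Or.inl rfl, ha⟩
  rw [this, Finset.card_singleton]

lemma inter_card_mev {n : ℕ} [NeZero (2*n)] (hn : 2 ≤ n) {a b : Z n} (hab : a ≠ b)
    (hpar : a.val % 2 = b.val % 2) : ({a, b} ∩ evens n).card % 2 = 0 := by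
  rcases Nat.eq_zero_or_pos (a.val % 2) with h0 | h1
  · have : ({a, b} : Finset (Z n)) ∩ evens n = {a, b} :=
      Finset.inter_eq_left.mpr (by
        intro v hv
        rcases Finset.mem_insert.mp hv with rfl | hv
        · exact mem_evens.mpr h0
        · rw [Finset.mem_singleton] at hv; subst hv; exact mem_evens.mpr (by omega))
    rw [this, Finset.card_insert_of_notMem (by simpa using hab), Finset.card_singleton]
  · have : ({a, b} : Finset (Z n)) ∩ evens n = ∅ := by
      ext v
      simp only [Finset.mem_inter, Finset.mem_insert, Finset.mem_singleton, mem_evens,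
        Finset.notMem_empty, iff_false, not_and]
      rintro (rfl | rfl) <;> omega
    rw [this, Finset.card_empty]


lemma no_rainbow (n : ℕ) (hn : 2 ≤ n) (hev : Even n) : ¬ HasRainbow n (fam n) := by
  haveI : NeZero (2*n) := ⟨by omega⟩
  rintro ⟨f, e, hf, hmem, he, hmatch⟩
  set E : Finset (Sym2 (Z n)) := Finset.image e Finset.univ with hEdef
  have hmatch1 : ∀ ed ∈ E, ¬ ed.IsDiag := fun ed h => hmatch.1 ed (Finset.mem_coe.mpr h)
  have hmatch2 : ∀ ed ∈ E, ∀ fd ∈ E, ed ≠ fd → ∀ v, v ∈ ed → v ∉ fd :=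
    fun ed h fd h' => hmatch.2 ed (Finset.mem_coe.mpr h) fd (Finset.mem_coe.mpr h')
  have hEcard : E.card = n := by
    rw [hEdef, Finset.card_image_of_injective _ he, Finset.card_univ, Fintype.card_fin]
  have hmemE : ∀ j : Fin n, e j ∈ E := fun j => Finset.mem_image_of_mem e (Finset.mem_univ j)
  have hfam : ∀ j : Fin n, (e j ∈ pm1 n ∧ (f j : ℕ) < n - 1) ∨
      (e j ∈ pm2 n ∧ n - 1 ≤ (f j : ℕ) ∧ (f j : ℕ) < 2*n-2) ∨
      (e j ∈ mev n ∧ (f j : ℕ) = 2*n-2) := by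
    intro j
    have h := hmem j
    have hlt := (f j).isLt
    simp only [fam] at h
    split_ifs at h with h1 h2
    · exact Or.inl ⟨h, h1⟩
    · exact Or.inr (Or.inl ⟨h, by omega, h2⟩)
    · exact Or.inr (Or.inr ⟨h, by omega⟩)
  have hdisjF : ∀ ed ∈ E, ∀ fd ∈ E, ed ≠ fd → Disjoint (edF n ed) (edF n fd) := by
    intro ed hed fd hfd hne
    rw [Finset.disjoint_left]
    intro v hv hv'
    exact hmatch2 ed hed fd hfd hne v (mem_edF.mp hv) (mem_edF.mp hv')
  have hcover : ∀ v : Z n, ∃ ed ∈ E, v ∈ ed := by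
    have hbU : (E.biUnion (edF n)).card = 2*n := by
      rw [Finset.card_biUnion hdisjF]
      have hh : ∀ ed ∈ E, (edF n ed).card = 2 := fun ed hed => card_edF (hmatch1 ed hed)
      rw [Finset.sum_congr rfl hh, Finset.sum_const, hEcard, smul_eq_mul]
      ring
    have huniv : E.biUnion (edF n) = univ :=
      Finset.eq_univ_of_card _ (by rw [hbU, ZMod.card])
    intro v
    have hv : v ∈ E.biUnion (edF n) := huniv ▸ Finset.mem_univ v
    rcases Finset.mem_biUnion.mp hv with ⟨ed, hed, hv⟩
    exact ⟨ed, hed, mem_edF.mp hv⟩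
  have hE3le : (E.filter (fun ed => ed ∈ mev n)).card ≤ 1 := by
    rw [Finset.card_le_one]
    intro a ha b hb
    rw [Finset.mem_filter] at ha hb
    rcases Finset.mem_image.mp ha.1 with ⟨j1, _, rfl⟩
    rcases Finset.mem_image.mp hb.1 with ⟨j2, _, rfl⟩
    have h1 : (f j1 : ℕ) = 2*n-2 := by
      rcases hfam j1 with ⟨h, _⟩ | ⟨h, _⟩ | ⟨_, h⟩
      · exact absurd ha.2 (cyc_mev_disj hn hev (Or.inl h))
      · exact absurd ha.2 (cyc_mev_disj hn hev (Or.inr h))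
      · exact h
    have h2 : (f j2 : ℕ) = 2*n-2 := by
      rcases hfam j2 with ⟨h, _⟩ | ⟨h, _⟩ | ⟨_, h⟩
      · exact absurd hb.2 (cyc_mev_disj hn hev (Or.inl h))
      · exact absurd hb.2 (cyc_mev_disj hn hev (Or.inr h))
      · exact h
    have : j1 = j2 := hf (Fin.ext (by omega : (f j1 : ℕ) = (f j2 : ℕ)))
    rw [this]
  have hE3zero : E.filter (fun ed => ed ∈ mev n) = ∅ := by
    have hsplit := Finset.card_filter_add_card_filter_not (s := E)
      (fun ed => ed ∈ mev n)
    have h2 : n = ∑ ed ∈ E, (edF n ed ∩ evens n).card := by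
      have h1 : evens n = E.biUnion (fun ed => edF n ed ∩ evens n) := by
        ext v
        simp only [Finset.mem_biUnion, Finset.mem_inter]
        constructor
        · intro hv
          rcases hcover v with ⟨ed, hed, hvm⟩
          exact ⟨ed, hed, mem_edF.mpr hvm, hv⟩
        · rintro ⟨ed, hed, _, hv2⟩
          exact hv2
      have hbig : (evens n).card = ∑ ed ∈ E, (edF n ed ∩ evens n).card := by
        conv_lhs => rw [h1]
        apply Finset.card_biUnion
        intro x hx y hy hxy
        exact (hdisjF x hx y hy hxy).mono Finset.inter_subset_left Finset.inter_subset_left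
      rw [evens_card hn] at hbig
      exact hbig
    rw [← Finset.sum_filter_add_sum_filter_not E (fun ed => ed ∈ mev n)] at h2
    have hc1 : ∑ ed ∈ E.filter (fun ed => ¬ ed ∈ mev n), (edF n ed ∩ evens n).card
        = (E.filter (fun ed => ¬ ed ∈ mev n)).card := by
      have hh : ∀ ed ∈ E.filter (fun ed => ¬ ed ∈ mev n), (edF n ed ∩ evens n).card = 1 := by
        intro ed hed
        rw [Finset.mem_filter] at hed
        have hcyc : ed ∈ pm1 n ∨ ed ∈ pm2 n := by
          rcases Finset.mem_image.mp hed.1 with ⟨j, _, rfl⟩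
          rcases hfam j with ⟨h, _⟩ | ⟨h, _⟩ | ⟨h, _⟩
          · exact Or.inl h
          · exact Or.inr h
          · exact absurd h hed.2
        rcases cyc_pair_parity hn hcyc with ⟨a, b, rfl, hpa, hpb⟩
        rw [edF_mk]
        exact inter_card_cyc hn (fun hab => by rw [hab] at hpa; omega) hpa hpb
      rw [Finset.sum_congr rfl hh, Finset.sum_const, smul_eq_mul, mul_one]
    rcases Nat.lt_or_ge (E.filter (fun ed => ed ∈ mev n)).card 1 with h | h
    · exact Finset.card_eq_zero.mp (by omega)
    · exfalso
      have hcard1 : (E.filter (fun ed => ed ∈ mev n)).card = 1 := le_antisymm hE3le h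
      rcases Finset.card_eq_one.mp hcard1 with ⟨ed0, hed0⟩
      have hmev0 : ed0 ∈ mev n :=
        (Finset.mem_filter.mp (hed0 ▸ Finset.mem_singleton_self ed0)).2
      rw [hed0, Finset.sum_singleton, hc1] at h2
      rcases mev_pair_parity hn hev hmev0 with ⟨a, b, hab0, hab, hpar⟩
      rw [hab0, edF_mk] at h2
      have hmod := inter_card_mev hn hab hpar
      rw [hEcard] at hsplit
      omega
  have hE12 : ∀ ed ∈ E, ed ∈ pm1 n ∨ ed ∈ pm2 n := by
    intro ed hed
    rcases Finset.mem_image.mp hed with ⟨j, _, rfl⟩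
    rcases hfam j with ⟨h, _⟩ | ⟨h, _⟩ | ⟨h, _⟩
    · exact Or.inl h
    · exact Or.inr h
    · exfalso
      have hmm : e j ∈ E.filter (fun ed => ed ∈ mev n) := Finset.mem_filter.mpr ⟨hed, h⟩
      rw [hE3zero] at hmm
      exact absurd hmm (Finset.notMem_empty _)
  have step : ∀ i, i < n → s(((2*i+1:ℕ) : Z n), ((2*i+2:ℕ) : Z n)) ∈ E →
      s(((2*((i+1)%n)+1:ℕ) : Z n), ((2*((i+1)%n)+2:ℕ) : Z n)) ∈ E := by
    intro i hi hPi
    obtain ⟨ed, hed, hvm⟩ := hcover ((2*i+3 : ℕ) : Z n)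
    have hmod3 : (2*i+3) % (2*n) = if i = n-1 then 1 else 2*i+3 := by
      split_ifs with hc
      · subst hc
        rw [show 2*(n-1)+3 = 2*n + 1 by omega, Nat.add_mod_left,
          Nat.mod_eq_of_lt (show 1 < 2*n by omega)]
      · exact Nat.mod_eq_of_lt (by omega)
    rcases hE12 ed hed with h1 | h2
    · exfalso
      rcases mem_pm1.mp h1 with ⟨j, hj, rfl⟩
      rcases Sym2.mem_iff.mp hvm with hv | hv
      · exact absurd (pareq hn hv) (by omega)
      · have h' := (ceq n _ _).mp hv
        rw [hmod3, Nat.mod_eq_of_lt (show 2*j+1 < 2*n by omega)] at h'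
        have hj' : ((2*j : ℕ) : Z n) = ((2*i+2 : ℕ) : Z n) := by
          rw [ceq]
          split_ifs at h' with hc
          · rw [show (2*j) = 0 by omega, show (2*i+2) = 2*n by omega,
              Nat.zero_mod, Nat.mod_self]
          · rw [Nat.mod_eq_of_lt (show 2*j < 2*n by omega),
              Nat.mod_eq_of_lt (show 2*i+2 < 2*n by omega)]
            omega
        have hne : s(((2*j:ℕ):Z n), ((2*j+1:ℕ):Z n)) ≠ s(((2*i+1:ℕ):Z n), ((2*i+2:ℕ):Z n)) := by
          intro hcontr
          rw [hcontr] at h1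
          exact pm12_disj hn _ h1 (mem_pm2.mpr ⟨i, hi, rfl⟩)
        exact hmatch2 _ hed _ hPi hne _ (Sym2.mem_iff.mpr (Or.inl hj'.symm))
          (Sym2.mem_iff.mpr (Or.inr rfl))
    · rcases mem_pm2.mp h2 with ⟨j, hj, rfl⟩
      rcases Sym2.mem_iff.mp hvm with hv | hv
      · have h' := (ceq n _ _).mp hv
        rw [hmod3, Nat.mod_eq_of_lt (show 2*j+1 < 2*n by omega)] at h'
        have hjj : j = (i+1) % n := by
          split_ifs at h' with hc
          · rw [hc, show (n-1+1) % n = 0 by rw [show n-1+1 = n by omega, Nat.mod_self]]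
            omega
          · rw [Nat.mod_eq_of_lt (show i+1 < n by omega)]
            omega
        rw [hjj] at hed
        exact hed
      · exact absurd (pareq hn hv) (by omega)
  have chain : ∀ k i, i < n → s(((2*i+1:ℕ):Z n), ((2*i+2:ℕ):Z n)) ∈ E →
      s(((2*((i+k)%n)+1:ℕ):Z n), ((2*((i+k)%n)+2:ℕ):Z n)) ∈ E := by
    intro k
    induction k with
    | zero => intro i hi h; simpa [Nat.mod_eq_of_lt hi] using h
    | succ k ih =>
      intro i hi h
      have h1 := ih i hi h
      have h2 := step ((i+k)%n) (Nat.mod_lt _ (by omega)) h1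
      rw [show ((i+k)%n+1)%n = (i+(k+1))%n by rw [Nat.mod_add_mod, Nat.add_assoc]] at h2
      exact h2
  have transfer : ∀ i j, i < n → j < n → s(((2*i+1:ℕ):Z n), ((2*i+2:ℕ):Z n)) ∈ E →
      s(((2*j+1:ℕ):Z n), ((2*j+2:ℕ):Z n)) ∈ E := by
    intro i j hi hj h
    have hc := chain (j + n - i) i hi h
    rwa [show (i + (j+n-i)) % n = j by
      rw [show i+(j+n-i) = j+n by omega, Nat.add_mod_right, Nat.mod_eq_of_lt hj]] at hc
  by_cases h0 : s(((2*0+1:ℕ):Z n), ((2*0+2:ℕ):Z n)) ∈ E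
  · have hsub : pm2 n ⊆ E := by
      intro ed hed
      rcases mem_pm2.mp hed with ⟨j, hj, rfl⟩
      exact transfer 0 j (by omega) hj h0
    have hEeq : pm2 n = E :=
      Finset.eq_of_subset_of_card_le hsub (hEcard.trans (pm2_card hn).symm).le
    have hband : ∀ j : Fin n, n - 1 ≤ (f j : ℕ) ∧ (f j : ℕ) < 2*n-2 := by
      intro j
      have hjE : e j ∈ pm2 n := by rw [hEeq]; exact hmemE j
      rcases hfam j with ⟨h, _⟩ | ⟨_, h⟩ | ⟨h, _⟩
      · exact absurd hjE (pm12_disj hn _ h)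
      · exact h
      · exact absurd h (cyc_mev_disj hn hev (Or.inr hjE))
    have hinj : Function.Injective
        (fun j : Fin n => (⟨(f j : ℕ) - (n-1), by have := hband j; omega⟩ : Fin (n-1))) := by
      intro a b hab
      apply hf
      apply Fin.ext
      have h1 := hband a; have h2 := hband b
      have h3 := congrArg Fin.val hab
      simp only at h3
      omega
    have hle := Fintype.card_le_of_injective _ hinj
    simp only [Fintype.card_fin] at hle
    omega
  · have hsub : E ⊆ pm1 n := by
      intro ed hed
      rcases hE12 ed hed with h | h
      · exact h
      · rcases mem_pm2.mp h with ⟨j, hj, rfl⟩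
        exact absurd (transfer j 0 hj (by omega) hed) h0
    have hEeq : E = pm1 n :=
      Finset.eq_of_subset_of_card_le hsub ((pm1_card hn).trans hEcard.symm).le
    have hband : ∀ j : Fin n, (f j : ℕ) < n - 1 := by
      intro j
      have hjE : e j ∈ pm1 n := by rw [← hEeq]; exact hmemE j
      rcases hfam j with ⟨_, h⟩ | ⟨h, _⟩ | ⟨h, _⟩
      · exact h
      · exact absurd h (pm12_disj hn _ hjE)
      · exact absurd h (cyc_mev_disj hn hev (Or.inl hjE))
    have hinj : Function.Injective
        (fun j : Fin n => (⟨(f j : ℕ), hband j⟩ : Fin (n-1))) := by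
      intro a b hab
      apply hf
      apply Fin.ext
      have h3 := congrArg Fin.val hab
      simp only at h3
      omega
    have hle := Fintype.card_le_of_injective _ hinj
    simp only [Fintype.card_fin] at hle
    omega

end Stmt19

/-- for every even `n ≥ 2` there is a family of `2n − 1` matchings of size `n`
on the vertices of the cycle `C_{2n}` with no rainbow matching of size `n`: `2n − 2` of the
matchings are matchings of the cycle, and the last consists only of pairs `v_a v_b` with
`b − a` even. -/
theorem stmt_19 (n : ℕ) (hn : 2 ≤ n) (hev : Even n) :
    ∃ M : Fin (2 * n - 1) → Finset (Sym2 (ZMod (2 * n))),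
      (∀ i, IsMatching ((M i : Finset (Sym2 (ZMod (2 * n)))) : Set (Sym2 (ZMod (2 * n)))) ∧
        (M i).card = n) ∧
      (∀ i : Fin (2 * n - 1), (i : ℕ) < 2 * n - 2 → M i ⊆ cycleEdges (2 * n)) ∧
      (∀ i : Fin (2 * n - 1), (i : ℕ) = 2 * n - 2 →
        ∀ e ∈ M i, ∃ a b : ℕ, a < b ∧ b < 2 * n ∧ Even (b - a) ∧
          e = s((a : ZMod (2 * n)), (b : ZMod (2 * n)))) ∧
      ¬ HasRainbow n M := by
  refine ⟨Stmt19.fam n, ?_, ?_, ?_, Stmt19.no_rainbow n hn hev⟩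
  · intro i
    simp only [Stmt19.fam]
    split_ifs with h1 h2
    · exact ⟨Stmt19.pm1_isMatching hn, Stmt19.pm1_card hn⟩
    · exact ⟨Stmt19.pm2_isMatching hn, Stmt19.pm2_card hn⟩
    · exact ⟨Stmt19.mev_isMatching hn hev, Stmt19.mev_card hn hev⟩
  · intro i hi
    simp only [Stmt19.fam]
    split_ifs with h1 h2
    · exact Stmt19.pm1_subset_cycle hn
    · exact Stmt19.pm2_subset_cycle hn
  · intro i hi
    simp only [Stmt19.fam]
    split_ifs with h1 h2
    · omega
    · omega
    · exact Stmt19.mev_chords hn hev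
end
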